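/- Suppose B is a crystal containing an element b_0 of weight 0 satisfying: (i) wt(b) ∈ ∑_{i∈I} ℤ_{≤0}α_i for all b ∈ B; (ii) b_0 is the unique element of B of weight 0; (iii) ε_i(b_0) = 0 for all i ∈ I; (iv) ε_i(b) ∈ ℤ for all b ∈ B and i ∈ I; (v) for each i ∈ I there exists a strict embedding Ψ_i : B → B ⊗ B_i; (vi) Ψ_i(B) ⊆ B ⊗ {f̃_i^n(0)_i : n ≥ 0}; (vii′) for every b ∈ B with b ≠ b_0 there exists i ∈ I with ẽ_i b ≠ 0. Then any two crystals satisfying (i)–(vi) and (vii′) are isomorphic: if (B, b_0) and (B′, b′_0) both satisfy these conditions, there is a bijection B → B′ sending b_0 to b′_0, preserving wt, ε_i and φ_i, and commuting with all ẽ_i and f̃_i. -/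

import Mathlib

/-!
STATEMENT 9: The Kashiwara–Saito characterization of the crystal B(∞): any two
crystals satisfying conditions (i)–(vi) and (vii′) are isomorphic.
-/
/-- The simple reflection `s_i` of the Cartan matrix `a`, acting on the root
lattice (tensored with `ℚ`), `s_i(α_j) = α_j - a_{ij} α_i`. -/
def sRefl {n : ℕ} (a : Fin n → Fin n → ℤ) (i : Fin n) : (Fin n → ℚ) → (Fin n → ℚ) :=
  fun v => v - (∑ j, (a i j : ℚ) * v j) • (Pi.single i 1 : Fin n → ℚ)

/-- The product `s_{i_1} s_{i_2} ⋯ s_{i_k}` of simple reflections along a word. -/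
def wProd {n : ℕ} (a : Fin n → Fin n → ℤ) (l : List (Fin n)) : (Fin n → ℚ) → (Fin n → ℚ) :=
  (l.map (sRefl a)).foldr (· ∘ ·) id

/-- An `n×n` Cartan matrix of a finite-dimensional complex simple Lie algebra:
an indecomposable generalized Cartan matrix whose Weyl group is finite. -/
structure SimpleCartanMatrix (n : ℕ) where
  a : Fin n → Fin n → ℤ
  npos : 0 < n
  diag : ∀ i, a i i = 2
  offdiag_nonpos : ∀ i j, i ≠ j → a i j ≤ 0
  zero_symm : ∀ i j, a i j = 0 → a j i = 0
  indecomposable : ∀ S : Set (Fin n), (∀ i ∈ S, ∀ j, j ∉ S → a i j = 0) → S = ∅ ∨ S = Set.univ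
  finiteWeyl : Set.Finite {w : (Fin n → ℚ) → (Fin n → ℚ) | ∃ l : List (Fin n), w = wProd a l}

/-- A word is reduced if it has minimal length among all words representing the
same Weyl group element. -/
def IsReducedList {n : ℕ} (a : Fin n → Fin n → ℤ) (l : List (Fin n)) : Prop :=
  ∀ l' : List (Fin n), wProd a l' = wProd a l → l.length ≤ l'.length

/-- The simple root `α_i`, as an element of the weight lattice `P = ⊕_j ℤΛ_j`
(in coordinates with respect to the fundamental weights: `α_i = ∑_j a_{ji} Λ_j`,
so that `⟨h_j, α_i⟩ = a_{ji}`). -/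
def alphaWt {n : ℕ} (a : Fin n → Fin n → ℤ) (i : Fin n) : Fin n → ℤ :=
  fun j => a j i

/-- The raw data of a crystal: maps `wt`, `ε_i`, `φ_i` and the Kashiwara
operators `ẽ_i, f̃_i` on `B ⊔ {0}` (`0` being `none`). -/
structure PreCrystal (n : ℕ) (B : Type*) where
  wt : B → Fin n → ℤ
  eps : Fin n → B → WithBot ℤ
  phi : Fin n → B → WithBot ℤ
  e : Fin n → Option B → Option B
  f : Fin n → Option B → Option B

/-- The crystal axioms for a `PreCrystal` with respect to a Cartan matrix. -/
structure IsCrystal {n : ℕ} (a : Fin n → Fin n → ℤ) {B : Type*}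
    (P : PreCrystal n B) : Prop where
  e_none : ∀ i, P.e i none = none
  f_none : ∀ i, P.f i none = none
  phi_eq : ∀ i b, P.phi i b = P.eps i b + ((P.wt b i : ℤ) : WithBot ℤ)
  wt_e : ∀ i b b', P.e i (some b) = some b' → P.wt b' = P.wt b + alphaWt a i
  eps_e : ∀ i b b', P.e i (some b) = some b' → P.eps i b' + 1 = P.eps i b
  phi_e : ∀ i b b', P.e i (some b) = some b' → P.phi i b' = P.phi i b + 1
  wt_f : ∀ i b b', P.f i (some b) = some b' → P.wt b' = P.wt b - alphaWt a i
  eps_f : ∀ i b b', P.f i (some b) = some b' → P.eps i b' = P.eps i b + 1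
  phi_f : ∀ i b b', P.f i (some b) = some b' → P.phi i b' + 1 = P.phi i b
  f_iff_e : ∀ i (b b' : B), P.f i (some b) = some b' ↔ P.e i (some b') = some b
  e_bot : ∀ i b, P.phi i b = ⊥ → P.e i (some b) = none
  f_bot : ∀ i b, P.phi i b = ⊥ → P.f i (some b) = none

/-- The tensor product of two crystals (on the underlying data). -/
noncomputable def PreCrystal.tensor {n : ℕ} {B1 B2 : Type*} (P1 : PreCrystal n B1)
    (P2 : PreCrystal n B2) : PreCrystal n (B1 × B2) where
  wt := fun b => P1.wt b.1 + P2.wt b.2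
  eps := fun i b => max (P1.eps i b.1) (P2.eps i b.2 + ((-(P1.wt b.1 i) : ℤ) : WithBot ℤ))
  phi := fun i b => max (P2.phi i b.2) (P1.phi i b.1 + ((P2.wt b.2 i : ℤ) : WithBot ℤ))
  e := fun i ob => ob.bind (fun b =>
    if P2.eps i b.2 ≤ P1.phi i b.1 then (P1.e i (some b.1)).map (fun b1 => (b1, b.2))
    else (P2.e i (some b.2)).map (fun b2 => (b.1, b2)))
  f := fun i ob => ob.bind (fun b =>
    if P2.eps i b.2 < P1.phi i b.1 then (P1.f i (some b.1)).map (fun b1 => (b1, b.2))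
    else (P2.f i (some b.2)).map (fun b2 => (b.1, b2)))


/-- The elementary crystal `B_i` on the set `ℤ` (the element `x` representing
`(x)_i`): `wt((x)_i) = x α_i`, `ε_i((x)_i) = −x`, `φ_i((x)_i) = x`,
`ε_j = φ_j = −∞` for `j ≠ i`, `ẽ_i (x)_i = (x+1)_i`, `f̃_i (x)_i = (x−1)_i`,
and `ẽ_j (x)_i = f̃_j (x)_i = 0` for `j ≠ i`. -/
def elemCrystal {n : ℕ} (a : Fin n → Fin n → ℤ) (i : Fin n) : PreCrystal n ℤ where
  wt := fun x => x • alphaWt a i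
  eps := fun j x => if j = i then ((-x : ℤ) : WithBot ℤ) else ⊥
  phi := fun j x => if j = i then ((x : ℤ) : WithBot ℤ) else ⊥
  e := fun j ox => ox.bind (fun x => if j = i then some (x + 1) else none)
  f := fun j ox => ox.bind (fun x => if j = i then some (x - 1) else none)

/-- A strict embedding of crystals: an injective map `B₁ ⊔ {0} → B₂ ⊔ {0}`
sending `0` to `0`, preserving `wt`, `ε_i`, `φ_i`, and commuting with all
`ẽ_i` and `f̃_i`. -/
structure IsStrictEmb {n : ℕ} {B1 B2 : Type*} (P1 : PreCrystal n B1)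
    (P2 : PreCrystal n B2) (Ψ : Option B1 → Option B2) : Prop where
  none_eq : Ψ none = none
  inj : Function.Injective Ψ
  wt_eq : ∀ b b', Ψ (some b) = some b' → P2.wt b' = P1.wt b
  eps_eq : ∀ i b b', Ψ (some b) = some b' → P2.eps i b' = P1.eps i b
  phi_eq : ∀ i b b', Ψ (some b) = some b' → P2.phi i b' = P1.phi i b
  comm_e : ∀ i ob, Ψ (P1.e i ob) = P2.e i (Ψ ob)
  comm_f : ∀ i ob, Ψ (P1.f i ob) = P2.f i (Ψ ob)

/-- The Kashiwara–Saito conditions (i)–(vi) and (vii′) on a crystal `B` with a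
distinguished element `b₀` of weight `0`. -/
structure KSConditions {n : ℕ} (a : Fin n → Fin n → ℤ) {B : Type*}
    (P : PreCrystal n B) (b0 : B) : Prop where
  crystal : IsCrystal a P
  /-- (i) `wt(B) ⊆ ∑_i ℤ_{≤0} α_i`. -/
  wt_nonpos : ∀ b : B, ∃ c : Fin n → ℤ, (∀ i, c i ≤ 0) ∧
    P.wt b = ∑ i : Fin n, c i • alphaWt a i
  wt_b0 : P.wt b0 = 0
  /-- (ii) `b₀` is the unique element of weight `0`. -/
  uniq_wt_zero : ∀ b : B, P.wt b = 0 → b = b0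
  /-- (iii) `ε_i(b₀) = 0`. -/
  eps_b0 : ∀ i, P.eps i b0 = (0 : ℤ)
  /-- (iv) `ε_i(b) ∈ ℤ`. -/
  eps_int : ∀ i b, P.eps i b ≠ ⊥
  /-- (v) and (vi): for each `i` there is a strict embedding
  `Ψ_i : B → B ⊗ B_i` with `Ψ_i(B) ⊆ B ⊗ {f̃_i^n (0)_i : n ≥ 0}`. -/
  emb : ∀ i : Fin n, ∃ Ψ : Option B → Option (B × ℤ),
    IsStrictEmb P (P.tensor (elemCrystal a i)) Ψ ∧
    ∀ b b' x, Ψ (some b) = some (b', x) → x ≤ 0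
  /-- (vii′) every `b ≠ b₀` admits `i` with `ẽ_i b ≠ 0`. -/
  has_e : ∀ b : B, b ≠ b0 → ∃ i, P.e i (some b) ≠ none

namespace KSAux

variable {n : ℕ}

lemma ell_single (a : Fin n → Fin n → ℤ) (i : Fin n) :
    (∑ j, (a i j : ℚ) * (Pi.single i 1 : Fin n → ℚ) j) = (a i i : ℚ) := by
  rw [Finset.sum_eq_single i]
  · simp
  · intro b _ hb; simp [Pi.single_eq_of_ne hb]
  · simp

lemma sRefl_add (a : Fin n → Fin n → ℤ) (i : Fin n) (v u : Fin n → ℚ) :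
    sRefl a i (v + u) = sRefl a i v + sRefl a i u := by
  unfold sRefl
  have : (∑ j, (a i j : ℚ) * (v + u) j) = (∑ j, (a i j : ℚ) * v j) + (∑ j, (a i j : ℚ) * u j) := by
    rw [← Finset.sum_add_distrib]; apply Finset.sum_congr rfl; intro j _
    simp [Pi.add_apply, mul_add]
  rw [this, add_smul]; abel

lemma sRefl_smul (a : Fin n → Fin n → ℤ) (i : Fin n) (c : ℚ) (v : Fin n → ℚ) :
    sRefl a i (c • v) = c • sRefl a i v := by
  unfold sRefl
  have : (∑ j, (a i j : ℚ) * (c • v) j) = c * (∑ j, (a i j : ℚ) * v j) := by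
    rw [Finset.mul_sum]; apply Finset.sum_congr rfl; intro j _
    simp [Pi.smul_apply, smul_eq_mul]; ring
  rw [this, smul_sub, smul_smul]

lemma sRefl_linear (a : Fin n → Fin n → ℤ) (i : Fin n) : IsLinearMap ℚ (sRefl a i) :=
  ⟨sRefl_add a i, sRefl_smul a i⟩

lemma ell_sRefl (C : SimpleCartanMatrix n) (i : Fin n) (v : Fin n → ℚ) :
    (∑ j, (C.a i j : ℚ) * (sRefl C.a i v) j) = -(∑ j, (C.a i j : ℚ) * v j) := by
  unfold sRefl
  have h2 : ∀ j, (C.a i j : ℚ) * (v - (∑ k, (C.a i k : ℚ) * v k) • (Pi.single i 1 : Fin n → ℚ)) j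
      = (C.a i j : ℚ) * v j - (∑ k, (C.a i k : ℚ) * v k) * ((C.a i j : ℚ) * (Pi.single i 1 : Fin n → ℚ) j) := by
    intro j; simp [Pi.sub_apply, Pi.smul_apply, smul_eq_mul]; ring
  rw [Finset.sum_congr rfl (fun j _ => h2 j), Finset.sum_sub_distrib, ← Finset.mul_sum, ell_single,
    C.diag i]
  push_cast
  ring

lemma sRefl_invol (C : SimpleCartanMatrix n) (i : Fin n) (v : Fin n → ℚ) :
    sRefl C.a i (sRefl C.a i v) = v := by
  conv_lhs => rw [sRefl, ell_sRefl C i v]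
  unfold sRefl
  rw [neg_smul]
  abel

lemma wProd_nil (a : Fin n → Fin n → ℤ) : wProd a [] = id := rfl

lemma wProd_cons (a : Fin n → Fin n → ℤ) (i : Fin n) (l : List (Fin n)) :
    wProd a (i :: l) = sRefl a i ∘ wProd a l := rfl

lemma wProd_append (a : Fin n → Fin n → ℤ) (l l' : List (Fin n)) :
    wProd a (l ++ l') = wProd a l ∘ wProd a l' := by
  induction l with
  | nil => rfl
  | cons i t ih => simp [wProd_cons, List.cons_append, ih, Function.comp_assoc]

lemma wProd_linear (a : Fin n → Fin n → ℤ) (l : List (Fin n)) : IsLinearMap ℚ (wProd a l) := by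
  induction l with
  | nil => exact ⟨fun _ _ => rfl, fun _ _ => rfl⟩
  | cons i t ih =>
    rw [wProd_cons]
    exact ⟨fun x y => by simp [Function.comp_apply, ih.map_add, sRefl_add],
           fun c x => by simp [Function.comp_apply, ih.map_smul, sRefl_smul]⟩

noncomputable def WFset (C : SimpleCartanMatrix n) :
    Finset ((Fin n → ℚ) → (Fin n → ℚ)) := C.finiteWeyl.toFinset

lemma mem_WFset (C : SimpleCartanMatrix n) (g : (Fin n → ℚ) → (Fin n → ℚ)) :
    g ∈ WFset C ↔ ∃ l, g = wProd C.a l := by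
  simp [WFset, Set.Finite.mem_toFinset, Set.mem_setOf_eq]

lemma id_mem_WFset (C : SimpleCartanMatrix n) : id ∈ WFset C :=
  (mem_WFset C id).2 ⟨[], rfl⟩

lemma comp_mem_WFset (C : SimpleCartanMatrix n) {g} (hg : g ∈ WFset C) (i : Fin n) :
    g ∘ sRefl C.a i ∈ WFset C := by
  obtain ⟨l, rfl⟩ := (mem_WFset C g).1 hg
  refine (mem_WFset C _).2 ⟨l ++ [i], ?_⟩
  rw [wProd_append]
  rfl

noncomputable def Bf (C : SimpleCartanMatrix n) (v u : Fin n → ℚ) : ℚ :=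
  ∑ g ∈ WFset C, ∑ k, g v k * g u k

lemma Bf_invariant (C : SimpleCartanMatrix n) (i : Fin n) (v u : Fin n → ℚ) :
    Bf C (sRefl C.a i v) (sRefl C.a i u) = Bf C v u := by
  unfold Bf
  refine Finset.sum_nbij' (fun g => g ∘ sRefl C.a i) (fun g => g ∘ sRefl C.a i)
    (fun g hg => comp_mem_WFset C hg i) (fun g hg => comp_mem_WFset C hg i) ?_ ?_ ?_
  · intro g _; funext x; simp [Function.comp_apply, sRefl_invol]
  · intro g _; funext x; simp [Function.comp_apply, sRefl_invol]
  · intro g _; rfl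

lemma Bf_pos (C : SimpleCartanMatrix n) (v : Fin n → ℚ) (hv : v ≠ 0) : 0 < Bf C v v := by
  have hterm : ∀ g ∈ WFset C, (0:ℚ) ≤ ∑ k, g v k * g v k := by
    intro g _; exact Finset.sum_nonneg (fun k _ => mul_self_nonneg _)
  have hid : (0:ℚ) < ∑ k, (id v) k * (id v) k := by
    obtain ⟨k, hk⟩ : ∃ k, v k ≠ 0 := by
      by_contra hall; push_neg at hall; exact hv (funext hall)
    apply Finset.sum_pos' (fun m _ => mul_self_nonneg _)
    exact ⟨k, Finset.mem_univ k, mul_self_pos.mpr hk⟩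
  calc (0:ℚ) < ∑ k, (id v) k * (id v) k := hid
    _ ≤ Bf C v v := Finset.single_le_sum hterm (id_mem_WFset C)

lemma Bf_neg_left (C : SimpleCartanMatrix n) (v u : Fin n → ℚ) :
    Bf C (-v) u = - Bf C v u := by
  unfold Bf
  rw [← Finset.sum_neg_distrib]
  apply Finset.sum_congr rfl
  intro g hg
  obtain ⟨l, rfl⟩ := (mem_WFset C g).1 hg
  have hlin := wProd_linear C.a l
  have : wProd C.a l (-v) = - wProd C.a l v := by
    have := hlin.map_smul (-1) v; simpa using this
  rw [this, ← Finset.sum_neg_distrib]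
  apply Finset.sum_congr rfl; intro k _; simp [Pi.neg_apply]

lemma Bf_lin_left (C : SimpleCartanMatrix n) (c : Fin n → ℚ) (v : Fin n → (Fin n → ℚ))
    (u : Fin n → ℚ) : Bf C (∑ i, c i • v i) u = ∑ i, c i * Bf C (v i) u := by
  unfold Bf
  have key : ∀ g ∈ WFset C,
      (∑ k, g (∑ i, c i • v i) k * g u k) = ∑ i, c i * ∑ k, g (v i) k * g u k := by
    intro g hg
    obtain ⟨l, rfl⟩ := (mem_WFset C g).1 hg
    have hlin := wProd_linear C.a l
    have hmap : wProd C.a l (∑ i, c i • v i) = ∑ i, c i • wProd C.a l (v i) := by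
      let L : (Fin n → ℚ) →ₗ[ℚ] (Fin n → ℚ) := IsLinearMap.mk' _ hlin
      show L (∑ i, c i • v i) = ∑ i, c i • L (v i)
      rw [map_sum]
      exact Finset.sum_congr rfl (fun i _ => map_smul L (c i) (v i))
    rw [hmap]
    calc ∑ k, (∑ i, c i • wProd C.a l (v i)) k * wProd C.a l u k
        = ∑ k, ∑ i, c i * (wProd C.a l (v i) k * wProd C.a l u k) := by
          apply Finset.sum_congr rfl; intro k _
          rw [Finset.sum_apply, Finset.sum_mul]
          apply Finset.sum_congr rfl; intro i _
          simp [smul_eq_mul]; ring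
      _ = ∑ i, ∑ k, c i * (wProd C.a l (v i) k * wProd C.a l u k) := Finset.sum_comm
      _ = ∑ i, c i * ∑ k, wProd C.a l (v i) k * wProd C.a l u k := by
          apply Finset.sum_congr rfl; intro i _; rw [Finset.mul_sum]
  rw [Finset.sum_congr rfl key, Finset.sum_comm]
  apply Finset.sum_congr rfl; intro i _; rw [Finset.mul_sum]

theorem cartan_ker (C : SimpleCartanMatrix n) (q : Fin n → ℚ)
    (hq : ∀ i, ∑ j, (C.a i j : ℚ) * q j = 0) : q = 0 := by
  have hfix : ∀ i, sRefl C.a i q = q := by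
    intro i; unfold sRefl; rw [hq i, zero_smul, sub_zero]
  have hsingle : ∀ i : Fin n, sRefl C.a i (Pi.single i 1) = -(Pi.single i 1) := by
    intro i; unfold sRefl; rw [ell_single, C.diag i]
    push_cast
    funext k; simp [Pi.sub_apply, Pi.smul_apply, Pi.neg_apply]; ring
  have hov : ∀ i : Fin n, Bf C (Pi.single i 1) q = 0 := by
    intro i
    have h1 : Bf C (Pi.single i 1) q = Bf C (sRefl C.a i (Pi.single i 1)) (sRefl C.a i q) :=
      (Bf_invariant C i _ _).symm
    rw [hsingle i, hfix i, Bf_neg_left] at h1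
    linarith
  by_contra hne
  have hpos := Bf_pos C q hne
  have hqe : q = ∑ i, q i • (Pi.single i 1 : Fin n → ℚ) := by
    funext k
    rw [Finset.sum_apply]
    rw [Finset.sum_eq_single k]
    · simp
    · intro b _ hb; simp [Pi.single_eq_of_ne (Ne.symm hb)]
    · simp
  have hexp : Bf C q q = ∑ i, q i * Bf C (Pi.single i 1) q := by
    nth_rewrite 1 [hqe]
    exact Bf_lin_left C q (fun i => Pi.single i 1) q
  rw [Finset.sum_congr rfl (fun i _ => by rw [hov i, mul_zero])] at hexp
  simp at hexp
  rw [hexp] at hpos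
  exact lt_irrefl 0 hpos


lemma alpha_sum_apply (a : Fin n → Fin n → ℤ) (c : Fin n → ℤ) (k : Fin n) :
    (∑ i, c i • alphaWt a i) k = ∑ i, c i * a k i := by
  rw [Finset.sum_apply]
  apply Finset.sum_congr rfl
  intro i _
  simp [alphaWt, Pi.smul_apply, smul_eq_mul]

theorem alpha_inj (C : SimpleCartanMatrix n) (c c' : Fin n → ℤ)
    (hc : ∑ i, c i • alphaWt C.a i = ∑ i, c' i • alphaWt C.a i) : c = c' := by
  set q : Fin n → ℚ := fun i => ((c i - c' i : ℤ) : ℚ) with hqdef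
  have hq : ∀ i, ∑ j, (C.a i j : ℚ) * q j = 0 := by
    intro i
    have hrow := congrFun hc i
    rw [alpha_sum_apply, alpha_sum_apply] at hrow
    have : ∑ j, (C.a i j : ℚ) * q j = ((∑ j, c j * C.a i j) - (∑ j, c' j * C.a i j) : ℤ) := by
      push_cast
      rw [← Finset.sum_sub_distrib]
      apply Finset.sum_congr rfl
      intro j _
      simp [hqdef]
      ring
    rw [this, hrow, sub_self, Int.cast_zero]
  have h0 := cartan_ker C q hq
  funext i
  have := congrFun h0 i
  simp [hqdef, sub_eq_zero] at this
  exact this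


section Crystal

variable {n : ℕ} {C : SimpleCartanMatrix n} {B : Type*} {P : PreCrystal n B} {b0 : B}

/- ### weight coordinates and height -/

noncomputable def cvec (h : KSConditions C.a P b0) (b : B) : Fin n → ℤ :=
  (h.wt_nonpos b).choose

lemma cvec_nonpos (h : KSConditions C.a P b0) (b : B) (i : Fin n) : cvec h b i ≤ 0 :=
  (h.wt_nonpos b).choose_spec.1 i

lemma cvec_spec (h : KSConditions C.a P b0) (b : B) :
    P.wt b = ∑ i, cvec h b i • alphaWt C.a i :=
  (h.wt_nonpos b).choose_spec.2

lemma cvec_unique (h : KSConditions C.a P b0) (b : B) (c : Fin n → ℤ)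
    (hc : P.wt b = ∑ i, c i • alphaWt C.a i) : cvec h b = c :=
  alpha_inj C _ _ (by rw [← cvec_spec h b, hc])

noncomputable def htZ (h : KSConditions C.a P b0) (b : B) : ℤ := -∑ i, cvec h b i

lemma htZ_nonneg (h : KSConditions C.a P b0) (b : B) : 0 ≤ htZ h b := by
  unfold htZ
  have : ∑ i, cvec h b i ≤ 0 :=
    Finset.sum_nonpos (fun i _ => cvec_nonpos h b i)
  omega

noncomputable def htN (h : KSConditions C.a P b0) (b : B) : ℕ := (htZ h b).toNat

lemma single_alpha (a : Fin n → Fin n → ℤ) (i : Fin n) (x : ℤ) :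
    x • alphaWt a i = ∑ j, (if j = i then x else 0) • alphaWt a j := by
  rw [Finset.sum_eq_single i]
  · simp
  · intro b _ hb; simp [hb]
  · simp

lemma cvec_shift (h : KSConditions C.a P b0) (b b' : B) (x : ℤ) (i : Fin n)
    (hw : P.wt b' = P.wt b + x • alphaWt C.a i) :
    cvec h b' = fun j => cvec h b j + (if j = i then x else 0) := by
  apply cvec_unique
  rw [hw, cvec_spec h b, single_alpha C.a i x, ← Finset.sum_add_distrib]
  apply Finset.sum_congr rfl
  intro j _
  rw [add_smul]

lemma htZ_shift (h : KSConditions C.a P b0) (b b' : B) (x : ℤ) (i : Fin n)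
    (hw : P.wt b' = P.wt b + x • alphaWt C.a i) : htZ h b' = htZ h b - x := by
  unfold htZ
  rw [cvec_shift h b b' x i hw, Finset.sum_add_distrib]
  have : ∑ j, (if j = i then x else 0) = x := by
    rw [Finset.sum_eq_single i] <;> simp +contextual
  omega

lemma cvec_b0 (h : KSConditions C.a P b0) : cvec h b0 = 0 := by
  apply cvec_unique
  rw [h.wt_b0]
  simp

lemma htZ_b0 (h : KSConditions C.a P b0) : htZ h b0 = 0 := by
  unfold htZ; rw [cvec_b0 h]; simp

lemma htZ_zero (h : KSConditions C.a P b0) (b : B) (hb : htZ h b = 0) : b = b0 := by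
  apply h.uniq_wt_zero
  have hall : ∀ i, cvec h b i = 0 := by
    intro i
    have h1 : ∑ i, cvec h b i = 0 := by unfold htZ at hb; omega
    have h2 := Finset.sum_eq_zero_iff_of_nonpos
      (f := fun i => cvec h b i) (s := Finset.univ) (fun i _ => cvec_nonpos h b i)
    exact (h2.mp h1) i (Finset.mem_univ i)
  rw [cvec_spec h b]
  apply Finset.sum_eq_zero
  intro i _
  rw [hall i, zero_smul]

lemma htZ_e (h : KSConditions C.a P b0) {b b1 : B} {i : Fin n}
    (he : P.e i (some b) = some b1) : htZ h b1 = htZ h b - 1 := by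
  apply htZ_shift h b b1 1 i
  rw [h.crystal.wt_e i b b1 he, one_smul]

lemma htN_e (h : KSConditions C.a P b0) {b b1 : B} {i : Fin n}
    (he : P.e i (some b) = some b1) : htN h b = htN h b1 + 1 := by
  have h1 := htZ_e h he
  have h2 := htZ_nonneg h b1
  unfold htN
  omega

lemma e_b0_none (h : KSConditions C.a P b0) (i : Fin n) : P.e i (some b0) = none := by
  by_contra hne
  obtain ⟨b1, hb1⟩ : ∃ b1, P.e i (some b0) = some b1 := by
    cases hx : P.e i (some b0) with
    | none => exact absurd hx hne
    | some b1 => exact ⟨b1, rfl⟩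
  have hc := cvec_shift h b0 b1 1 i (by rw [h.crystal.wt_e i b0 b1 hb1, one_smul])
  have := cvec_nonpos h b1 i
  rw [hc] at this
  rw [cvec_b0 h] at this
  simp at this

/- ### integer values of eps and phi -/

lemma eps_exists (h : KSConditions C.a P b0) (i : Fin n) (b : B) :
    ∃ z : ℤ, P.eps i b = (z : WithBot ℤ) := by
  cases hx : P.eps i b with
  | bot => exact absurd hx (h.eps_int i b)
  | coe z => exact ⟨z, rfl⟩

noncomputable def epsZ (h : KSConditions C.a P b0) (i : Fin n) (b : B) : ℤ :=
  (eps_exists h i b).choose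

lemma eps_coe (h : KSConditions C.a P b0) (i : Fin n) (b : B) :
    P.eps i b = (epsZ h i b : WithBot ℤ) :=
  (eps_exists h i b).choose_spec

noncomputable def phiZ (h : KSConditions C.a P b0) (i : Fin n) (b : B) : ℤ :=
  epsZ h i b + P.wt b i

lemma phi_coe (h : KSConditions C.a P b0) (i : Fin n) (b : B) :
    P.phi i b = (phiZ h i b : WithBot ℤ) := by
  rw [h.crystal.phi_eq i b, eps_coe h i b, phiZ, WithBot.coe_add]

lemma epsZ_b0 (h : KSConditions C.a P b0) (i : Fin n) : epsZ h i b0 = 0 := by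
  have := eps_coe h i b0
  rw [h.eps_b0 i] at this
  exact_mod_cast this.symm

lemma phiZ_b0 (h : KSConditions C.a P b0) (i : Fin n) : phiZ h i b0 = 0 := by
  unfold phiZ
  rw [epsZ_b0 h i, h.wt_b0]
  simp

lemma epsZ_e (h : KSConditions C.a P b0) {i : Fin n} {b b1 : B}
    (he : P.e i (some b) = some b1) : epsZ h i b1 + 1 = epsZ h i b := by
  have := h.crystal.eps_e i b b1 he
  rw [eps_coe h i b, eps_coe h i b1] at this
  exact_mod_cast this

lemma epsZ_f (h : KSConditions C.a P b0) {i : Fin n} {b b1 : B}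
    (hf : P.f i (some b) = some b1) : epsZ h i b1 = epsZ h i b + 1 := by
  have := h.crystal.eps_f i b b1 hf
  rw [eps_coe h i b, eps_coe h i b1] at this
  exact_mod_cast this

lemma phiZ_e (h : KSConditions C.a P b0) {i : Fin n} {b b1 : B}
    (he : P.e i (some b) = some b1) : phiZ h i b1 = phiZ h i b + 1 := by
  have := h.crystal.phi_e i b b1 he
  rw [phi_coe h i b, phi_coe h i b1] at this
  exact_mod_cast this

lemma phiZ_f (h : KSConditions C.a P b0) {i : Fin n} {b b1 : B}
    (hf : P.f i (some b) = some b1) : phiZ h i b1 + 1 = phiZ h i b := by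
  have := h.crystal.phi_f i b b1 hf
  rw [phi_coe h i b, phi_coe h i b1] at this
  exact_mod_cast this

end Crystal

section Embedding

variable {n : ℕ} {C : SimpleCartanMatrix n} {B : Type*} {P : PreCrystal n B} {b0 : B}

/- ### elementary crystal computations -/

lemma elem_eps_self (a : Fin n → Fin n → ℤ) (i : Fin n) (x : ℤ) :
    (elemCrystal a i).eps i x = ((-x : ℤ) : WithBot ℤ) := if_pos rfl

lemma elem_eps_other (a : Fin n → Fin n → ℤ) {i j : Fin n} (hji : j ≠ i) (x : ℤ) :
    (elemCrystal a i).eps j x = ⊥ := if_neg hji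

lemma elem_phi_self (a : Fin n → Fin n → ℤ) (i : Fin n) (x : ℤ) :
    (elemCrystal a i).phi i x = ((x : ℤ) : WithBot ℤ) := if_pos rfl

lemma elem_e_self (a : Fin n → Fin n → ℤ) (i : Fin n) (x : ℤ) :
    (elemCrystal a i).e i (some x) = some (x + 1) := by simp [elemCrystal]

lemma elem_e_other (a : Fin n → Fin n → ℤ) {i j : Fin n} (hji : j ≠ i) (x : ℤ) :
    (elemCrystal a i).e j (some x) = none := by simp [elemCrystal, hji]

lemma elem_f_self (a : Fin n → Fin n → ℤ) (i : Fin n) (x : ℤ) :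
    (elemCrystal a i).f i (some x) = some (x - 1) := by simp [elemCrystal]

lemma elem_f_other (a : Fin n → Fin n → ℤ) {i j : Fin n} (hji : j ≠ i) (x : ℤ) :
    (elemCrystal a i).f j (some x) = none := by simp [elemCrystal, hji]

lemma elem_wt_self (C : SimpleCartanMatrix n) (i : Fin n) (x : ℤ) :
    (elemCrystal C.a i).wt x i = 2 * x := by
  show (x • alphaWt C.a i) i = 2 * x
  simp [alphaWt, C.diag i, mul_comm]

/- ### tensor unfolding -/

lemma tensor_e_some {B1 B2 : Type*} (P1 : PreCrystal n B1) (P2 : PreCrystal n B2)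
    (i : Fin n) (p : B1 × B2) :
    (P1.tensor P2).e i (some p) =
      if P2.eps i p.2 ≤ P1.phi i p.1 then (P1.e i (some p.1)).map (fun b1 => (b1, p.2))
      else (P2.e i (some p.2)).map (fun b2 => (p.1, b2)) := rfl

lemma tensor_f_some {B1 B2 : Type*} (P1 : PreCrystal n B1) (P2 : PreCrystal n B2)
    (i : Fin n) (p : B1 × B2) :
    (P1.tensor P2).f i (some p) =
      if P2.eps i p.2 < P1.phi i p.1 then (P1.f i (some p.1)).map (fun b1 => (b1, p.2))
      else (P2.f i (some p.2)).map (fun b2 => (p.1, b2)) := rfl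

/- ### the chosen embeddings, and the data (bet, ex) -/

noncomputable def Psi (h : KSConditions C.a P b0) (i : Fin n) :
    Option B → Option (B × ℤ) := (h.emb i).choose

lemma Psi_emb (h : KSConditions C.a P b0) (i : Fin n) :
    IsStrictEmb P (P.tensor (elemCrystal C.a i)) (Psi h i) := (h.emb i).choose_spec.1

lemma Psi_some (h : KSConditions C.a P b0) (i : Fin n) (b : B) :
    ∃ p : B × ℤ, Psi h i (some b) = some p := by
  cases hx : Psi h i (some b) with
  | some p => exact ⟨p, rfl⟩
  | none =>
    exfalso
    have h0 : Psi h i (some b) = Psi h i none := by rw [hx, (Psi_emb h i).none_eq]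
    exact Option.some_ne_none b ((Psi_emb h i).inj h0)

noncomputable def bet (h : KSConditions C.a P b0) (i : Fin n) (b : B) : B :=
  (Psi_some h i b).choose.1

noncomputable def ex (h : KSConditions C.a P b0) (i : Fin n) (b : B) : ℤ :=
  (Psi_some h i b).choose.2

lemma psi_eq (h : KSConditions C.a P b0) (i : Fin n) (b : B) :
    Psi h i (some b) = some (bet h i b, ex h i b) := (Psi_some h i b).choose_spec

lemma ex_nonpos (h : KSConditions C.a P b0) (i : Fin n) (b : B) : ex h i b ≤ 0 :=
  (h.emb i).choose_spec.2 b (bet h i b) (ex h i b) (psi_eq h i b)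

lemma psi_inj (h : KSConditions C.a P b0) {i : Fin n} {b b' : B}
    (hp : bet h i b = bet h i b' ∧ ex h i b = ex h i b') : b = b' := by
  have : Psi h i (some b) = Psi h i (some b') := by
    rw [psi_eq, psi_eq, hp.1, hp.2]
  exact Option.some_injective B ((Psi_emb h i).inj this)

/- ### relation lemmas -/

lemma wt_rel (h : KSConditions C.a P b0) (i : Fin n) (b : B) :
    P.wt b = P.wt (bet h i b) + ex h i b • alphaWt C.a i :=
  ((Psi_emb h i).wt_eq b _ (psi_eq h i b)).symm

lemma eps_rel_self (h : KSConditions C.a P b0) (i : Fin n) (b : B) :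
    epsZ h i b = max (epsZ h i (bet h i b)) (-ex h i b - P.wt (bet h i b) i) := by
  have h1 := (Psi_emb h i).eps_eq i b _ (psi_eq h i b)
  have h2 : (P.tensor (elemCrystal C.a i)).eps i (bet h i b, ex h i b)
      = ((max (epsZ h i (bet h i b)) (-ex h i b - P.wt (bet h i b) i) : ℤ) : WithBot ℤ) := by
    show max (P.eps i (bet h i b)) ((elemCrystal C.a i).eps i (ex h i b)
      + ((-(P.wt (bet h i b) i) : ℤ) : WithBot ℤ)) = _
    rw [eps_coe h i (bet h i b), elem_eps_self, ← WithBot.coe_add,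
      show (-ex h i b + -(P.wt (bet h i b) i)) = -ex h i b - P.wt (bet h i b) i from by ring,
      WithBot.coe_max]
  rw [h2, eps_coe h i b] at h1
  exact_mod_cast h1.symm

lemma eps_rel_other (h : KSConditions C.a P b0) {i j : Fin n} (hji : j ≠ i) (b : B) :
    epsZ h j b = epsZ h j (bet h i b) := by
  have h1 := (Psi_emb h i).eps_eq j b _ (psi_eq h i b)
  have h2 : (P.tensor (elemCrystal C.a i)).eps j (bet h i b, ex h i b)
      = P.eps j (bet h i b) := by
    show max (P.eps j (bet h i b)) ((elemCrystal C.a i).eps j (ex h i b) + _) = _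
    rw [elem_eps_other C.a hji, WithBot.bot_add]
    exact max_eq_left bot_le
  rw [h2, eps_coe h j b, eps_coe h j (bet h i b)] at h1
  exact_mod_cast h1.symm

lemma phi_rel_self (h : KSConditions C.a P b0) (i : Fin n) (b : B) :
    phiZ h i b = max (ex h i b) (phiZ h i (bet h i b) + 2 * ex h i b) := by
  have h1 := (Psi_emb h i).phi_eq i b _ (psi_eq h i b)
  have h2 : (P.tensor (elemCrystal C.a i)).phi i (bet h i b, ex h i b)
      = ((max (ex h i b) (phiZ h i (bet h i b) + 2 * ex h i b) : ℤ) : WithBot ℤ) := by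
    show max ((elemCrystal C.a i).phi i (ex h i b))
      (P.phi i (bet h i b) + (((elemCrystal C.a i).wt (ex h i b) i : ℤ) : WithBot ℤ)) = _
    rw [elem_phi_self, phi_coe h i (bet h i b), elem_wt_self C i, ← WithBot.coe_add,
      WithBot.coe_max]
  rw [h2, phi_coe h i b] at h1
  exact_mod_cast h1.symm

lemma e_rel_other (h : KSConditions C.a P b0) {i j : Fin n} (hji : j ≠ i) (b : B) :
    Psi h i (P.e j (some b))
      = Option.map (fun β1 => (β1, ex h i b)) (P.e j (some (bet h i b))) := by
  rw [(Psi_emb h i).comm_e, psi_eq, tensor_e_some, if_pos]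
  exact le_trans (le_of_eq (elem_eps_other C.a hji (ex h i b))) bot_le

lemma f_rel_other (h : KSConditions C.a P b0) {i j : Fin n} (hji : j ≠ i) (b : B) :
    Psi h i (P.f j (some b))
      = Option.map (fun β1 => (β1, ex h i b)) (P.f j (some (bet h i b))) := by
  rw [(Psi_emb h i).comm_f, psi_eq, tensor_f_some, if_pos]
  rw [elem_eps_other C.a hji, phi_coe h j (bet h i b)]
  exact WithBot.bot_lt_coe _

end Embedding
section Core

variable {n : ℕ} {C : SimpleCartanMatrix n} {B : Type*} {P : PreCrystal n B} {b0 : B}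

lemma psi_eq_none_iff (h : KSConditions C.a P b0) (i : Fin n) (ob : Option B) :
    Psi h i ob = none ↔ ob = none := by
  constructor
  · intro hn
    cases ob with
    | none => rfl
    | some b => rw [psi_eq] at hn; exact absurd hn (Option.some_ne_none _)
  · intro hn; rw [hn, (Psi_emb h i).none_eq]

lemma e_rel_self_settled (h : KSConditions C.a P b0) {i : Fin n} {b : B}
    (hs : -ex h i b ≤ phiZ h i (bet h i b)) :
    Psi h i (P.e i (some b))
      = Option.map (fun β1 => (β1, ex h i b)) (P.e i (some (bet h i b))) := by
  rw [(Psi_emb h i).comm_e, psi_eq, tensor_e_some, if_pos]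
  rw [elem_eps_self, phi_coe h i (bet h i b)]
  exact_mod_cast hs

lemma e_rel_self_unsettled (h : KSConditions C.a P b0) {i : Fin n} {b : B}
    (hu : phiZ h i (bet h i b) < -ex h i b) :
    Psi h i (P.e i (some b)) = some (bet h i b, ex h i b + 1) := by
  rw [(Psi_emb h i).comm_e, psi_eq, tensor_e_some, if_neg, elem_e_self]
  · rfl
  · rw [elem_eps_self, phi_coe h i (bet h i b)]
    intro hle
    exact absurd (WithBot.coe_le_coe.mp hle) (not_le.mpr hu)

lemma f_rel_self_big (h : KSConditions C.a P b0) {i : Fin n} {b : B}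
    (hs : -ex h i b < phiZ h i (bet h i b)) :
    Psi h i (P.f i (some b))
      = Option.map (fun β1 => (β1, ex h i b)) (P.f i (some (bet h i b))) := by
  rw [(Psi_emb h i).comm_f, psi_eq, tensor_f_some, if_pos]
  rw [elem_eps_self, phi_coe h i (bet h i b)]
  exact_mod_cast hs

lemma f_rel_self_small (h : KSConditions C.a P b0) {i : Fin n} {b : B}
    (hs : phiZ h i (bet h i b) ≤ -ex h i b) :
    Psi h i (P.f i (some b)) = some (bet h i b, ex h i b - 1) := by
  rw [(Psi_emb h i).comm_f, psi_eq, tensor_f_some, if_neg, elem_f_self]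
  · rfl
  · rw [elem_eps_self, phi_coe h i (bet h i b)]
    intro hlt
    exact absurd (WithBot.coe_lt_coe.mp hlt) (not_lt.mpr hs)

/- ### data extraction lemmas -/

lemma e_other_data (h : KSConditions C.a P b0) {i j : Fin n} (hji : j ≠ i) {b b1 : B}
    (he : P.e j (some b) = some b1) :
    P.e j (some (bet h i b)) = some (bet h i b1) ∧ ex h i b1 = ex h i b := by
  have h1 := e_rel_other h hji b
  rw [he, psi_eq] at h1
  obtain ⟨β1, hβ1, hpair⟩ := Option.map_eq_some_iff.mp h1.symm
  have hp := Prod.ext_iff.mp hpair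
  simp only at hp
  rw [hβ1, hp.1]
  exact ⟨rfl, hp.2.symm⟩

lemma e_other_none' (h : KSConditions C.a P b0) {i j : Fin n} (hji : j ≠ i) {b : B}
    (he : P.e j (some (bet h i b)) = none) : P.e j (some b) = none := by
  have h1 := e_rel_other h hji b
  rw [he] at h1
  exact (psi_eq_none_iff h i _).mp h1

lemma f_other_data (h : KSConditions C.a P b0) {i j : Fin n} (hji : j ≠ i) {b b1 : B}
    (hf : P.f j (some b) = some b1) :
    P.f j (some (bet h i b)) = some (bet h i b1) ∧ ex h i b1 = ex h i b := by
  have h1 := f_rel_other h hji b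
  rw [hf, psi_eq] at h1
  obtain ⟨β1, hβ1, hpair⟩ := Option.map_eq_some_iff.mp h1.symm
  have hp := Prod.ext_iff.mp hpair
  simp only at hp
  rw [hβ1, hp.1]
  exact ⟨rfl, hp.2.symm⟩

lemma f_other_none' (h : KSConditions C.a P b0) {i j : Fin n} (hji : j ≠ i) {b : B}
    (hf : P.f j (some (bet h i b)) = none) : P.f j (some b) = none := by
  have h1 := f_rel_other h hji b
  rw [hf] at h1
  exact (psi_eq_none_iff h i _).mp h1

lemma f_other_some' (h : KSConditions C.a P b0) {i j : Fin n} (hji : j ≠ i) {b : B} {β1 : B}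
    (hf : P.f j (some (bet h i b)) = some β1) :
    ∃ b1, P.f j (some b) = some b1 ∧ bet h i b1 = β1 ∧ ex h i b1 = ex h i b := by
  have h1 := f_rel_other h hji b
  rw [hf] at h1
  cases hx : P.f j (some b) with
  | none => rw [hx, (psi_eq_none_iff h i none).mpr rfl] at h1; exact absurd h1.symm (Option.some_ne_none _)
  | some b1 =>
    rw [hx, psi_eq] at h1
    have hp := Prod.ext_iff.mp (Option.some_injective _ h1)
    simp only at hp
    exact ⟨b1, rfl, hp.1, hp.2⟩

lemma e_other_some' (h : KSConditions C.a P b0) {i j : Fin n} (hji : j ≠ i) {b : B} {β1 : B}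
    (he : P.e j (some (bet h i b)) = some β1) :
    ∃ b1, P.e j (some b) = some b1 ∧ bet h i b1 = β1 ∧ ex h i b1 = ex h i b := by
  have h1 := e_rel_other h hji b
  rw [he] at h1
  cases hx : P.e j (some b) with
  | none => rw [hx, (psi_eq_none_iff h i none).mpr rfl] at h1; exact absurd h1.symm (Option.some_ne_none _)
  | some b1 =>
    rw [hx, psi_eq] at h1
    have hp := Prod.ext_iff.mp (Option.some_injective _ h1)
    simp only at hp
    exact ⟨b1, rfl, hp.1, hp.2⟩

lemma e_settled_data (h : KSConditions C.a P b0) {i : Fin n} {b b1 : B}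
    (hs : -ex h i b ≤ phiZ h i (bet h i b)) (he : P.e i (some b) = some b1) :
    P.e i (some (bet h i b)) = some (bet h i b1) ∧ ex h i b1 = ex h i b := by
  have h1 := e_rel_self_settled h hs
  rw [he, psi_eq] at h1
  obtain ⟨β1, hβ1, hpair⟩ := Option.map_eq_some_iff.mp h1.symm
  have hp := Prod.ext_iff.mp hpair
  simp only at hp
  rw [hβ1, hp.1]
  exact ⟨rfl, hp.2.symm⟩

lemma e_settled_none' (h : KSConditions C.a P b0) {i : Fin n} {b : B}
    (hs : -ex h i b ≤ phiZ h i (bet h i b)) (he : P.e i (some (bet h i b)) = none) :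
    P.e i (some b) = none := by
  have h1 := e_rel_self_settled h hs
  rw [he] at h1
  exact (psi_eq_none_iff h i _).mp h1

lemma e_settled_some' (h : KSConditions C.a P b0) {i : Fin n} {b : B} {β1 : B}
    (hs : -ex h i b ≤ phiZ h i (bet h i b)) (he : P.e i (some (bet h i b)) = some β1) :
    ∃ b1, P.e i (some b) = some b1 ∧ bet h i b1 = β1 ∧ ex h i b1 = ex h i b := by
  have h1 := e_rel_self_settled h hs
  rw [he] at h1
  cases hx : P.e i (some b) with
  | none => rw [hx, (psi_eq_none_iff h i none).mpr rfl] at h1; exact absurd h1.symm (Option.some_ne_none _)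
  | some b1 =>
    rw [hx, psi_eq] at h1
    have hp := Prod.ext_iff.mp (Option.some_injective _ h1)
    simp only at hp
    exact ⟨b1, rfl, hp.1, hp.2⟩

lemma e_unsettled (h : KSConditions C.a P b0) {i : Fin n} {b : B}
    (hu : phiZ h i (bet h i b) < -ex h i b) :
    ∃ b1, P.e i (some b) = some b1 ∧ bet h i b1 = bet h i b ∧ ex h i b1 = ex h i b + 1 := by
  have h1 := e_rel_self_unsettled h hu
  cases hx : P.e i (some b) with
  | none => rw [hx, (psi_eq_none_iff h i none).mpr rfl] at h1; exact absurd h1.symm (Option.some_ne_none _)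
  | some b1 =>
    rw [hx, psi_eq] at h1
    have hp := Prod.ext_iff.mp (Option.some_injective _ h1)
    simp only at hp
    exact ⟨b1, rfl, hp.1, hp.2⟩

lemma f_big_data (h : KSConditions C.a P b0) {i : Fin n} {b b1 : B}
    (hs : -ex h i b < phiZ h i (bet h i b)) (hf : P.f i (some b) = some b1) :
    P.f i (some (bet h i b)) = some (bet h i b1) ∧ ex h i b1 = ex h i b := by
  have h1 := f_rel_self_big h hs
  rw [hf, psi_eq] at h1
  obtain ⟨β1, hβ1, hpair⟩ := Option.map_eq_some_iff.mp h1.symm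
  have hp := Prod.ext_iff.mp hpair
  simp only at hp
  rw [hβ1, hp.1]
  exact ⟨rfl, hp.2.symm⟩

lemma f_big_some' (h : KSConditions C.a P b0) {i : Fin n} {b : B} {β1 : B}
    (hs : -ex h i b < phiZ h i (bet h i b)) (hf : P.f i (some (bet h i b)) = some β1) :
    ∃ b1, P.f i (some b) = some b1 ∧ bet h i b1 = β1 ∧ ex h i b1 = ex h i b := by
  have h1 := f_rel_self_big h hs
  rw [hf] at h1
  cases hx : P.f i (some b) with
  | none => rw [hx, (psi_eq_none_iff h i none).mpr rfl] at h1; exact absurd h1.symm (Option.some_ne_none _)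
  | some b1 =>
    rw [hx, psi_eq] at h1
    have hp := Prod.ext_iff.mp (Option.some_injective _ h1)
    simp only at hp
    exact ⟨b1, rfl, hp.1, hp.2⟩

lemma f_big_none' (h : KSConditions C.a P b0) {i : Fin n} {b : B}
    (hs : -ex h i b < phiZ h i (bet h i b)) (hf : P.f i (some (bet h i b)) = none) :
    P.f i (some b) = none := by
  have h1 := f_rel_self_big h hs
  rw [hf] at h1
  exact (psi_eq_none_iff h i _).mp h1

lemma f_small (h : KSConditions C.a P b0) {i : Fin n} {b : B}
    (hs : phiZ h i (bet h i b) ≤ -ex h i b) :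
    ∃ b1, P.f i (some b) = some b1 ∧ bet h i b1 = bet h i b ∧ ex h i b1 = ex h i b - 1 := by
  have h1 := f_rel_self_small h hs
  cases hx : P.f i (some b) with
  | none => rw [hx, (psi_eq_none_iff h i none).mpr rfl] at h1; exact absurd h1.symm (Option.some_ne_none _)
  | some b1 =>
    rw [hx, psi_eq] at h1
    have hp := Prod.ext_iff.mp (Option.some_injective _ h1)
    simp only at hp
    exact ⟨b1, rfl, hp.1, hp.2⟩

/- ### the distinguished element b0 -/

lemma bet_ex_b0 (h : KSConditions C.a P b0) (i : Fin n) :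
    bet h i b0 = b0 ∧ ex h i b0 = 0 := by
  have hw := wt_rel h i b0
  rw [h.wt_b0] at hw
  have hwβ : P.wt (bet h i b0) = ∑ j, (if j = i then -ex h i b0 else 0) • alphaWt C.a j := by
    rw [← single_alpha C.a i (-ex h i b0), neg_smul]
    exact eq_neg_of_add_eq_zero_left hw.symm
  have hcv := cvec_unique h _ _ hwβ
  have hnp := cvec_nonpos h (bet h i b0) i
  rw [hcv] at hnp
  simp only [if_pos rfl] at hnp
  have hnp2 : -ex h i b0 ≤ 0 := by simpa using hnp
  have hx0 : ex h i b0 = 0 := le_antisymm (ex_nonpos h i b0) (by omega)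
  have hβ : bet h i b0 = b0 := by
    apply h.uniq_wt_zero
    rw [hwβ, hx0]
    apply Finset.sum_eq_zero
    intro j _
    simp
  exact ⟨hβ, hx0⟩

lemma f_b0_val (h : KSConditions C.a P b0) (i : Fin n) :
    ∃ d, P.f i (some b0) = some d ∧ bet h i d = b0 ∧ ex h i d = -1 := by
  have hs : phiZ h i (bet h i b0) ≤ -ex h i b0 := by
    rw [(bet_ex_b0 h i).1, (bet_ex_b0 h i).2, phiZ_b0 h i]
    omega
  obtain ⟨d, hd, h1, h2⟩ := f_small h hs
  rw [(bet_ex_b0 h i).1] at h1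
  rw [(bet_ex_b0 h i).2] at h2
  exact ⟨d, hd, h1, by omega⟩

/- ### FIX: ex = 0 implies bet = b -/

lemma bet_fix' (h : KSConditions C.a P b0) :
    ∀ N, ∀ b : B, htN h b = N → ∀ i, ex h i b = 0 → bet h i b = b := by
  intro N
  induction N using Nat.strong_induction_on with
  | _ N IH =>
  intro b hN i hx
  by_cases hb : b = b0
  · subst hb; exact (bet_ex_b0 h i).1
  obtain ⟨j, hj⟩ := h.has_e b hb
  obtain ⟨b1, hb1⟩ : ∃ b1, P.e j (some b) = some b1 := by
    cases hc : P.e j (some b) with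
    | none => exact absurd hc hj
    | some b1 => exact ⟨b1, rfl⟩
  have hfb : P.f j (some b1) = some b := (h.crystal.f_iff_e j b1 b).mpr hb1
  have hlt : htN h b1 < N := by rw [← hN, htN_e h hb1]; omega
  by_cases hji : j = i
  · subst hji
    by_cases hbig : -ex h j b1 < phiZ h j (bet h j b1)
    · obtain ⟨hfd, hxd⟩ := f_big_data h hbig hfb
      rw [hx] at hxd
      have hfix1 := IH _ hlt b1 rfl j hxd.symm
      rw [hfix1] at hfd
      rw [hfb] at hfd
      exact (Option.some_injective _ hfd).symm
    · push_neg at hbig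
      have h1 := f_rel_self_small h hbig
      rw [hfb, psi_eq] at h1
      have hp := Prod.ext_iff.mp (Option.some_injective _ h1)
      simp only at hp
      rw [hx] at hp
      have := ex_nonpos h j b1
      omega
  · obtain ⟨hfd, hxd⟩ := f_other_data h (Ne.symm (fun hz => hji hz.symm)) hfb
    rw [hx] at hxd
    have hfix1 := IH _ hlt b1 rfl i hxd.symm
    rw [hfix1] at hfd
    rw [hfb] at hfd
    exact (Option.some_injective _ hfd).symm

lemma bet_fix (h : KSConditions C.a P b0) {i : Fin n} {b : B} (hx : ex h i b = 0) :
    bet h i b = b := bet_fix' h (htN h b) b rfl i hx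

lemma phiZ_nonneg_of_ex_zero (h : KSConditions C.a P b0) {i : Fin n} {b : B}
    (hx : ex h i b = 0) : 0 ≤ phiZ h i b := by
  have h1 := phi_rel_self h i b
  rw [hx, bet_fix h hx] at h1
  simp at h1
  omega

end Core

section Core2

variable {n : ℕ} {C : SimpleCartanMatrix n} {B : Type*} {P : PreCrystal n B} {b0 : B}

lemma htZ_bet (h : KSConditions C.a P b0) (i : Fin n) (b : B) :
    htZ h (bet h i b) = htZ h b + ex h i b := by
  have := htZ_shift h (bet h i b) b (ex h i b) i (wt_rel h i b)
  omega

lemma htN_bet_lt (h : KSConditions C.a P b0) {i : Fin n} {b : B} (hx : ex h i b < 0) :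
    htN h (bet h i b) < htN h b := by
  have h1 := htZ_bet h i b
  have h2 := htZ_nonneg h (bet h i b)
  have h3 := htZ_nonneg h b
  unfold htN
  omega

lemma htN_e_lt (h : KSConditions C.a P b0) {i : Fin n} {b b1 : B}
    (he : P.e i (some b) = some b1) : htN h b1 < htN h b := by
  rw [htN_e h he]
  omega

lemma e_extract {i : Fin n} {b : B} (hj : P.e i (some b) ≠ none) :
    ∃ b1, P.e i (some b) = some b1 := by
  cases hc : P.e i (some b) with
  | none => exact absurd hc hj
  | some b1 => exact ⟨b1, rfl⟩

/-- X: the second component of `Ψ_i(bet_i b)` vanishes. -/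
lemma ex_bet_zero' (h : KSConditions C.a P b0) :
    ∀ N, ∀ b : B, htN h b = N → ∀ i, ex h i (bet h i b) = 0 := by
  intro N
  induction N using Nat.strong_induction_on with
  | _ N IH =>
  intro b hN i
  by_cases hb : b = b0
  · subst hb
    rw [(bet_ex_b0 h i).1]
    exact (bet_ex_b0 h i).2
  obtain ⟨j, hj⟩ := h.has_e b hb
  obtain ⟨b1, hb1⟩ := e_extract hj
  have hfb : P.f j (some b1) = some b := (h.crystal.f_iff_e j b1 b).mpr hb1
  have hlt : htN h b1 < N := by rw [← hN]; exact htN_e_lt h hb1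
  have IH1 : ex h i (bet h i b1) = 0 := IH _ hlt b1 rfl i
  by_cases hji : j = i
  · subst hji
    by_cases hbig : -ex h j b1 < phiZ h j (bet h j b1)
    · obtain ⟨hfd, hxd⟩ := f_big_data h hbig hfb
      -- apply big-case data at d := bet h j b1
      have hd0 : ex h j (bet h j b1) = 0 := IH1
      have hdfix : bet h j (bet h j b1) = bet h j b1 := bet_fix h hd0
      have hs' : -ex h j (bet h j b1) < phiZ h j (bet h j (bet h j b1)) := by
        rw [hd0, hdfix]
        have := ex_nonpos h j b1
        omega
      obtain ⟨_, hres⟩ := f_big_data h hs' hfd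
      rw [hres, hd0]
    · push_neg at hbig
      have h1 := f_rel_self_small h hbig
      rw [hfb, psi_eq] at h1
      have hp := Prod.ext_iff.mp (Option.some_injective _ h1)
      simp only at hp
      rw [hp.1]
      exact IH1
  · have hji' : j ≠ i := hji
    obtain ⟨hfd, _⟩ := f_other_data h hji' hfb
    obtain ⟨_, hres⟩ := f_other_data h hji' hfd
    rw [hres]
    exact IH1

lemma ex_bet_zero (h : KSConditions C.a P b0) (i : Fin n) (b : B) :
    ex h i (bet h i b) = 0 := ex_bet_zero' h (htN h b) b rfl i

/-- T3: `φ_i(bet_i b) ≥ 0`. -/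
lemma phiZ_bet_nonneg (h : KSConditions C.a P b0) (i : Fin n) (b : B) :
    0 ≤ phiZ h i (bet h i b) :=
  phiZ_nonneg_of_ex_zero h (ex_bet_zero h i b)

/-- V: if all `ex` vanish then `b = b0`. -/
lemma allzero' (h : KSConditions C.a P b0) :
    ∀ N, ∀ b : B, htN h b = N → (∀ i, ex h i b = 0) → b = b0 := by
  intro N
  induction N using Nat.strong_induction_on with
  | _ N IH =>
  intro b hN hall
  by_cases hb : b = b0
  · exact hb
  exfalso
  obtain ⟨j, hj⟩ := h.has_e b hb
  obtain ⟨b1, hb1⟩ := e_extract hj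
  have hlt : htN h b1 < N := by rw [← hN]; exact htN_e_lt h hb1
  have hall1 : ∀ i, ex h i b1 = 0 := by
    intro i
    by_cases hji : j = i
    · subst hji
      have hs : -ex h j b ≤ phiZ h j (bet h j b) := by
        rw [hall j]
        simpa using phiZ_bet_nonneg h j b
      obtain ⟨_, hres⟩ := e_settled_data h hs hb1
      rw [hres, hall j]
    · obtain ⟨_, hres⟩ := e_other_data h hji hb1
      rw [hres, hall i]
  have hb10 : b1 = b0 := IH _ hlt b1 rfl hall1
  rw [hb10] at hb1
  have hfb : P.f j (some b0) = some b := (h.crystal.f_iff_e j b0 b).mpr hb1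
  obtain ⟨d, hd, _, hxd⟩ := f_b0_val h j
  rw [hd] at hfb
  have : d = b := Option.some_injective _ hfb
  subst this
  rw [hall j] at hxd
  exact absurd hxd (by omega)

lemma exists_neg_ex (h : KSConditions C.a P b0) (b : B) (hb : b ≠ b0) :
    ∃ j, ex h j b < 0 := by
  by_contra hno
  push_neg at hno
  apply hb
  apply allzero' h (htN h b) b rfl
  intro i
  exact le_antisymm (ex_nonpos h i b) (hno i)

end Core2

section Norm

variable {n : ℕ} {C : SimpleCartanMatrix n} {B : Type*} {P : PreCrystal n B} {b0 : B}

lemma e_other_none (h : KSConditions C.a P b0) {i j : Fin n} (hji : j ≠ i) {b : B}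
    (he : P.e j (some b) = none) : P.e j (some (bet h i b)) = none := by
  have h1 := e_rel_other h hji b
  rw [he, (Psi_emb h i).none_eq] at h1
  exact Option.map_eq_none_iff.mp h1.symm

lemma e_settled_none (h : KSConditions C.a P b0) {i : Fin n} {b : B}
    (hs : -ex h i b ≤ phiZ h i (bet h i b)) (he : P.e i (some b) = none) :
    P.e i (some (bet h i b)) = none := by
  have h1 := e_rel_self_settled h hs
  rw [he, (Psi_emb h i).none_eq] at h1
  exact Option.map_eq_none_iff.mp h1.symm

noncomputable def kaux (P : PreCrystal n B) (i : Fin n) : ℕ → B → ℕ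
  | 0, _ => 0
  | (m+1), b => match P.e i (some b) with
    | none => 0
    | some b1 => kaux P i m b1 + 1

noncomputable def kfun (h : KSConditions C.a P b0) (i : Fin n) (b : B) : ℕ :=
  kaux P i (htN h b) b

lemma kfun_none (h : KSConditions C.a P b0) {i : Fin n} {b : B}
    (he : P.e i (some b) = none) : kfun h i b = 0 := by
  unfold kfun
  cases hn : htN h b with
  | zero => rfl
  | succ m => simp [kaux, he]

lemma kfun_some (h : KSConditions C.a P b0) {i : Fin n} {b b1 : B}
    (he : P.e i (some b) = some b1) : kfun h i b = kfun h i b1 + 1 := by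
  have hn := htN_e h he
  unfold kfun
  rw [hn]
  simp [kaux, he]

lemma kfun_bet_other (h : KSConditions C.a P b0) :
    ∀ N, ∀ b : B, htN h b = N → ∀ i j, j ≠ i → kfun h j b = kfun h j (bet h i b) := by
  intro N
  induction N using Nat.strong_induction_on with
  | _ N IH =>
  intro b hN i j hji
  cases he : P.e j (some b) with
  | none => rw [kfun_none h he, kfun_none h (e_other_none h hji he)]
  | some b1 =>
    obtain ⟨hed, _⟩ := e_other_data h hji he
    rw [kfun_some h he, kfun_some h hed]
    have hlt : htN h b1 < N := by rw [← hN]; exact htN_e_lt h he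
    rw [IH _ hlt b1 rfl i j hji]

lemma kfun_bet_settled (h : KSConditions C.a P b0) :
    ∀ N, ∀ b : B, htN h b = N → ∀ i, -ex h i b ≤ phiZ h i (bet h i b) →
      kfun h i b = kfun h i (bet h i b) := by
  intro N
  induction N using Nat.strong_induction_on with
  | _ N IH =>
  intro b hN i hs
  cases he : P.e i (some b) with
  | none => rw [kfun_none h he, kfun_none h (e_settled_none h hs he)]
  | some b1 =>
    obtain ⟨hed, hxd⟩ := e_settled_data h hs he
    rw [kfun_some h he, kfun_some h hed]
    have hlt : htN h b1 < N := by rw [← hN]; exact htN_e_lt h he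
    have hbet1 : bet h i b1 = bet h i b1 := rfl
    -- settledness for b1 : bet h i b1 is the e-image of bet h i b
    have hb1bet : P.e i (some (bet h i b)) = some (bet h i b1) := hed
    have hphi : phiZ h i (bet h i b1) = phiZ h i (bet h i b) + 1 := phiZ_e h hb1bet
    have hs1 : -ex h i b1 ≤ phiZ h i (bet h i b1) := by
      rw [hxd, hphi]; omega
    rw [IH _ hlt b1 rfl i hs1]

/-- upper normality: `ε_i(b)` equals the length of the i-chain of `e`'s from `b`. -/
lemma eps_eq_k' (h : KSConditions C.a P b0) :
    ∀ N, ∀ b : B, htN h b = N → ∀ i, epsZ h i b = kfun h i b := by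
  intro N
  induction N using Nat.strong_induction_on with
  | _ N IH =>
  intro b hN i
  by_cases hb : b = b0
  · subst hb
    rw [epsZ_b0 h i, kfun_none h (e_b0_none h i)]
    simp
  by_cases hex : ∃ j, j ≠ i ∧ ex h j b < 0
  · obtain ⟨j, hji, hj⟩ := hex
    have hij : i ≠ j := fun hz => hji hz.symm
    have hε : epsZ h i b = epsZ h i (bet h j b) := eps_rel_other h hij b
    have hk : kfun h i b = kfun h i (bet h j b) := kfun_bet_other h (htN h b) b rfl j i hij
    have hlt : htN h (bet h j b) < N := by rw [← hN]; exact htN_bet_lt h hj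
    rw [hε, hk, IH _ hlt (bet h j b) rfl i]
  · by_cases hxi : ex h i b < 0
    · by_cases hs : -ex h i b ≤ phiZ h i (bet h i b)
      · have hphidef : phiZ h i (bet h i b) = epsZ h i (bet h i b) + P.wt (bet h i b) i := rfl
        have hε : epsZ h i b = epsZ h i (bet h i b) := by
          rw [eps_rel_self h i b]
          rw [max_eq_left (by omega)]
        have hk : kfun h i b = kfun h i (bet h i b) :=
          kfun_bet_settled h (htN h b) b rfl i hs
        have hlt : htN h (bet h i b) < N := by rw [← hN]; exact htN_bet_lt h hxi
        rw [hε, hk, IH _ hlt (bet h i b) rfl i]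
      · push_neg at hs
        obtain ⟨b1, he, _, _⟩ := e_unsettled h hs
        have hlt : htN h b1 < N := by rw [← hN]; exact htN_e_lt h he
        have hε := epsZ_e h he
        have hIH := IH _ hlt b1 rfl i
        rw [kfun_some h he]
        push_cast
        omega
    · exfalso
      apply hb
      apply allzero' h (htN h b) b rfl
      intro j
      by_cases hji : j = i
      · subst hji; exact le_antisymm (ex_nonpos h j b) (by omega)
      · have := ex_nonpos h j b
        push_neg at hex
        have := hex j hji
        omega

lemma eps_eq_k (h : KSConditions C.a P b0) (i : Fin n) (b : B) :
    epsZ h i b = kfun h i b := eps_eq_k' h (htN h b) b rfl i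

lemma epsZ_nonneg (h : KSConditions C.a P b0) (i : Fin n) (b : B) : 0 ≤ epsZ h i b := by
  rw [eps_eq_k h i b]
  exact Int.ofNat_nonneg _

lemma e_some_of_eps_pos (h : KSConditions C.a P b0) {i : Fin n} {b : B}
    (hε : 0 < epsZ h i b) : ∃ b1, P.e i (some b) = some b1 := by
  cases he : P.e i (some b) with
  | none => rw [eps_eq_k h i b, kfun_none h he] at hε; exact absurd hε (by omega)
  | some b1 => exact ⟨b1, rfl⟩

lemma e_none_of_eps_zero (h : KSConditions C.a P b0) {i : Fin n} {b : B}
    (hε : epsZ h i b = 0) : P.e i (some b) = none := by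
  cases he : P.e i (some b) with
  | none => rfl
  | some b1 => rw [eps_eq_k h i b, kfun_some h he] at hε; exact absurd hε (by omega)

/-- f never kills. -/
lemma f_some' (h : KSConditions C.a P b0) :
    ∀ N, ∀ b : B, htN h b = N → ∀ i, P.f i (some b) ≠ none := by
  intro N
  induction N using Nat.strong_induction_on with
  | _ N IH =>
  intro b hN i
  by_cases hb : b = b0
  · subst hb
    obtain ⟨d, hd, _, _⟩ := f_b0_val h i
    rw [hd]
    exact Option.some_ne_none d
  by_cases hex : ∃ j, j ≠ i ∧ ex h j b < 0
  · obtain ⟨j, hji, hj⟩ := hex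
    have hij : i ≠ j := fun hz => hji hz.symm
    intro hfn
    have h1 := f_rel_other h hij b
    rw [hfn, (Psi_emb h j).none_eq] at h1
    have h2 : P.f i (some (bet h j b)) = none := Option.map_eq_none_iff.mp h1.symm
    have hlt : htN h (bet h j b) < N := by rw [← hN]; exact htN_bet_lt h hj
    exact IH _ hlt (bet h j b) rfl i h2
  · by_cases hxi : ex h i b < 0
    · by_cases hbig : -ex h i b < phiZ h i (bet h i b)
      · intro hfn
        have h1 := f_rel_self_big h hbig
        rw [hfn, (Psi_emb h i).none_eq] at h1
        have h2 : P.f i (some (bet h i b)) = none := Option.map_eq_none_iff.mp h1.symm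
        have hlt : htN h (bet h i b) < N := by rw [← hN]; exact htN_bet_lt h hxi
        exact IH _ hlt (bet h i b) rfl i h2
      · push_neg at hbig
        obtain ⟨b1, hf, _, _⟩ := f_small h hbig
        rw [hf]
        exact Option.some_ne_none b1
    · exfalso
      apply hb
      apply allzero' h (htN h b) b rfl
      intro j
      by_cases hji : j = i
      · subst hji; exact le_antisymm (ex_nonpos h j b) (by omega)
      · have := ex_nonpos h j b
        push_neg at hex
        have := hex j hji
        omega

lemma f_some (h : KSConditions C.a P b0) (i : Fin n) (b : B) :
    ∃ b1, P.f i (some b) = some b1 := by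
  cases hf : P.f i (some b) with
  | none => exact absurd hf (f_some' h (htN h b) b rfl i)
  | some b1 => exact ⟨b1, rfl⟩

end Norm

section Surj

variable {n : ℕ} {C : SimpleCartanMatrix n} {B : Type*} {P : PreCrystal n B} {b0 : B}

lemma psi_pair (h : KSConditions C.a P b0) {i : Fin n} {b β : B} {x : ℤ}
    (hp : Psi h i (some b) = some (β, x)) : bet h i b = β ∧ ex h i b = x := by
  rw [psi_eq] at hp
  have hq := Prod.ext_iff.mp (Option.some_injective _ hp)
  simpa using hq

/-- surjectivity of `Ψ_i` onto pairs `(d, -M)` with `ex_i d = 0`. -/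
lemma psi_surj (h : KSConditions C.a P b0) (i : Fin n) :
    ∀ M : ℕ, ∀ d : B, ex h i d = 0 → ∃ b, Psi h i (some b) = some (d, -(M:ℤ)) := by
  intro M
  induction M using Nat.strong_induction_on with
  | _ M IHM =>
  rcases M with _ | m
  · intro d hx
    refine ⟨d, ?_⟩
    rw [psi_eq, bet_fix h hx, hx]
    norm_num
  · suffices hsuff : ∀ N, ∀ d : B, htN h d = N → ex h i d = 0 →
        ∃ b, Psi h i (some b) = some (d, -((m+1 : ℕ):ℤ)) by
      intro d hx
      exact hsuff (htN h d) d rfl hx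
    intro N
    induction N using Nat.strong_induction_on with
    | _ N IHN =>
    intro d hN hx
    by_cases hC1 : phiZ h i d ≤ (m:ℤ)
    · obtain ⟨b', hb'⟩ := IHM m (by omega) d hx
      obtain ⟨hbet, hbx⟩ := psi_pair h hb'
      have hsmall : phiZ h i (bet h i b') ≤ -ex h i b' := by
        rw [hbet, hbx]
        omega
      obtain ⟨b1, hf, h1, h2⟩ := f_small h hsmall
      refine ⟨b1, ?_⟩
      rw [psi_eq, h1, h2, hbet, hbx]
      congr 2
      push_cast
      ring
    · push_neg at hC1
      by_cases hε : 0 < epsZ h i d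
      · obtain ⟨u, hu⟩ := e_some_of_eps_pos h hε
        have hfixd : bet h i d = d := bet_fix h hx
        have hs : -ex h i d ≤ phiZ h i (bet h i d) := by
          rw [hx, hfixd]
          have : (0:ℤ) ≤ (m:ℤ) := Int.ofNat_nonneg m
          omega
        obtain ⟨hed, hxu⟩ := e_settled_data h hs hu
        have hxu0 : ex h i u = 0 := by rw [hxu, hx]
        have hlt : htN h u < N := by rw [← hN]; exact htN_e_lt h hu
        obtain ⟨c, hc⟩ := IHN _ hlt u rfl hxu0
        obtain ⟨hcb, hcx⟩ := psi_pair h hc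
        have hphiu : phiZ h i u = phiZ h i d + 1 := phiZ_e h hu
        have hbig : -ex h i c < phiZ h i (bet h i c) := by
          rw [hcb, hcx, hphiu]
          push_cast
          omega
        have hfu : P.f i (some (bet h i c)) = some d := by
          rw [hcb]
          exact (h.crystal.f_iff_e i u d).mpr hu
        obtain ⟨b1, _, hb1, hx1⟩ := f_big_some' h hbig hfu
        refine ⟨b1, ?_⟩
        rw [psi_eq, hb1, hx1, hcx]
      · have hε0 : epsZ h i d = 0 :=
          le_antisymm (by omega) (epsZ_nonneg h i d)
        have hd0 : d ≠ b0 := by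
          intro hdd
          rw [hdd, phiZ_b0 h i] at hC1
          have : (0:ℤ) ≤ (m:ℤ) := Int.ofNat_nonneg m
          omega
        obtain ⟨j, hj⟩ := h.has_e d hd0
        obtain ⟨u, hu⟩ := e_extract hj
        have hji : j ≠ i := by
          intro hz
          subst hz
          rw [e_none_of_eps_zero h hε0] at hu
          exact Option.some_ne_none _ hu.symm
        obtain ⟨_, hxu⟩ := e_other_data h hji hu
        have hxu0 : ex h i u = 0 := by rw [hxu, hx]
        have hlt : htN h u < N := by rw [← hN]; exact htN_e_lt h hu
        obtain ⟨c, hc⟩ := IHN _ hlt u rfl hxu0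
        obtain ⟨hcb, hcx⟩ := psi_pair h hc
        have hfu : P.f j (some (bet h i c)) = some d := by
          rw [hcb]
          exact (h.crystal.f_iff_e j u d).mpr hu
        obtain ⟨b1, _, hb1, hx1⟩ := f_other_some' h hji hfu
        refine ⟨b1, ?_⟩
        rw [psi_eq, hb1, hx1, hcx]

end Surj

section Iso

open scoped Classical

variable {n : ℕ} {C : SimpleCartanMatrix n} {B B' : Type*}
  {P : PreCrystal n B} {P' : PreCrystal n B'} {b0 : B} {b0' : B'}

lemma e_inj {a : Fin n → Fin n → ℤ} (hcr : IsCrystal a P) {i : Fin n} {u v d : B}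
    (h1 : P.e i (some u) = some d) (h2 : P.e i (some v) = some d) : u = v := by
  have hf1 := (hcr.f_iff_e i d u).mpr h1
  have hf2 := (hcr.f_iff_e i d v).mpr h2
  rw [hf1] at hf2
  exact Option.some_injective _ hf2

lemma htN_pos_of_ne (h : KSConditions C.a P b0) {b : B} (hb : b ≠ b0) : htN h b ≠ 0 := by
  intro hz
  apply hb
  apply htZ_zero h b
  have := htZ_nonneg h b
  unfold htN at hz
  omega

noncomputable def Phiaux (h : KSConditions C.a P b0) (h' : KSConditions C.a P' b0') :
    ℕ → B → B'
  | 0, _ => b0'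
  | (m+1), b =>
    if hb : b = b0 then b0'
    else if hS : ∃ c', Psi h' ((exists_neg_ex h b hb).choose) (some c')
        = some (Phiaux h h' m (bet h ((exists_neg_ex h b hb).choose) b),
                ex h ((exists_neg_ex h b hb).choose) b)
      then hS.choose else b0'

lemma Phiaux_indep (h : KSConditions C.a P b0) (h' : KSConditions C.a P' b0') :
    ∀ m m' : ℕ, ∀ b : B, htN h b ≤ m → htN h b ≤ m' →
      Phiaux h h' m b = Phiaux h h' m' b := by
  intro m
  induction m using Nat.strong_induction_on with
  | _ m IH =>
  intro m' b hm hm'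
  by_cases hb : b = b0
  · subst hb
    cases m <;> cases m' <;> simp [Phiaux]
  · have hpos := htN_pos_of_ne h hb
    obtain ⟨k, rfl⟩ : ∃ k, m = k + 1 := ⟨m - 1, by omega⟩
    obtain ⟨k', rfl⟩ : ∃ k', m' = k' + 1 := ⟨m' - 1, by omega⟩
    have hblt : htN h (bet h ((exists_neg_ex h b hb).choose) b) < htN h b :=
      htN_bet_lt h (exists_neg_ex h b hb).choose_spec
    have heq : Phiaux h h' k (bet h ((exists_neg_ex h b hb).choose) b)
        = Phiaux h h' k' (bet h ((exists_neg_ex h b hb).choose) b) := by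
      apply IH k (by omega) k' _ (by omega) (by omega)
    show (if hb : b = b0 then b0' else _) = (if hb : b = b0 then b0' else _)
    rw [dif_neg hb, dif_neg hb, heq]

noncomputable def Phi (h : KSConditions C.a P b0) (h' : KSConditions C.a P' b0') :
    B → B' := fun b => Phiaux h h' (htN h b) b

lemma Phi_b0 (h : KSConditions C.a P b0) (h' : KSConditions C.a P' b0') :
    Phi h h' b0 = b0' := by
  unfold Phi
  cases hn : htN h b0 with
  | zero => rfl
  | succ m => simp [Phiaux]

lemma Phi_unfold (h : KSConditions C.a P b0) (h' : KSConditions C.a P' b0')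
    {b : B} (hb : b ≠ b0) :
    Phi h h' b =
      if hS : ∃ c', Psi h' ((exists_neg_ex h b hb).choose) (some c')
          = some (Phi h h' (bet h ((exists_neg_ex h b hb).choose) b),
                  ex h ((exists_neg_ex h b hb).choose) b)
      then hS.choose else b0' := by
  have hpos := htN_pos_of_ne h hb
  obtain ⟨m, hm⟩ : ∃ m, htN h b = m + 1 := ⟨htN h b - 1, by omega⟩
  have hblt : htN h (bet h ((exists_neg_ex h b hb).choose) b) < htN h b :=
    htN_bet_lt h (exists_neg_ex h b hb).choose_spec
  have heq : Phiaux h h' m (bet h ((exists_neg_ex h b hb).choose) b)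
      = Phi h h' (bet h ((exists_neg_ex h b hb).choose) b) := by
    apply Phiaux_indep h h' m _ _ (by omega) (le_refl _)
  show Phiaux h h' (htN h b) b = _
  rw [hm]
  show (if hb : b = b0 then b0' else _) = _
  rw [dif_neg hb, heq]

end Iso

section Master

open scoped Classical

variable {n : ℕ} {C : SimpleCartanMatrix n} {B B' : Type*}
  {P : PreCrystal n B} {P' : PreCrystal n B'} {b0 : B} {b0' : B'}

theorem master (h : KSConditions C.a P b0) (h' : KSConditions C.a P' b0') :
    ∀ N, ∀ b : B, htN h b = N →
      (P'.wt (Phi h h' b) = P.wt b) ∧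
      (∀ i, Option.map (Phi h h') (P.e i (some b)) = P'.e i (some (Phi h h' b))) ∧
      (∀ i, kfun h' i (Phi h h' b) = kfun h i b) ∧
      (∀ i, Psi h' i (some (Phi h h' b)) = some (Phi h h' (bet h i b), ex h i b)) := by
  intro N
  induction N using Nat.strong_induction_on with
  | _ N IH =>
  intro b hN
  by_cases hb : b = b0
  · subst hb
    refine ⟨?_, ?_, ?_, ?_⟩
    · rw [Phi_b0, h'.wt_b0, h.wt_b0]
    · intro i; rw [e_b0_none h i, Phi_b0, e_b0_none h' i]; rfl
    · intro i; rw [Phi_b0, kfun_none h' (e_b0_none h' i), kfun_none h (e_b0_none h i)]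
    · intro i
      rw [Phi_b0, psi_eq h' i b0', (bet_ex_b0 h' i).1, (bet_ex_b0 h' i).2,
        (bet_ex_b0 h i).1, (bet_ex_b0 h i).2, Phi_b0]
  -- IH extraction
  have hIHwt : ∀ c : B, htN h c < N → P'.wt (Phi h h' c) = P.wt c :=
    fun c hc => (IH _ hc c rfl).1
  have hIHe : ∀ c : B, htN h c < N → ∀ i,
      Option.map (Phi h h') (P.e i (some c)) = P'.e i (some (Phi h h' c)) :=
    fun c hc => (IH _ hc c rfl).2.1
  have hIHk : ∀ c : B, htN h c < N → ∀ i, kfun h' i (Phi h h' c) = kfun h i c :=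
    fun c hc => (IH _ hc c rfl).2.2.1
  have hIHpsi : ∀ c : B, htN h c < N → ∀ i,
      Psi h' i (some (Phi h h' c)) = some (Phi h h' (bet h i c), ex h i c) :=
    fun c hc => (IH _ hc c rfl).2.2.2
  have hIHeps : ∀ c : B, htN h c < N → ∀ i, epsZ h' i (Phi h h' c) = epsZ h i c := by
    intro c hc i
    rw [eps_eq_k h', hIHk c hc i, eps_eq_k h]
  have hIHphi : ∀ c : B, htN h c < N → ∀ i, phiZ h' i (Phi h h' c) = phiZ h i c := by
    intro c hc i
    show epsZ h' i (Phi h h' c) + P'.wt (Phi h h' c) i = epsZ h i c + P.wt c i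
    rw [hIHeps c hc i, hIHwt c hc]
  -- choose j
  obtain ⟨j, hjch, hj⟩ : ∃ j, j = (exists_neg_ex h b hb).choose ∧ ex h j b < 0 :=
    ⟨_, rfl, (exists_neg_ex h b hb).choose_spec⟩
  have hβlt : htN h (bet h j b) < N := by rw [← hN]; exact htN_bet_lt h hj
  -- Step 1 : the defining equation for Phi b
  have hexβ : ex h j (bet h j b) = 0 := ex_bet_zero h j b
  have hpsiβ := hIHpsi (bet h j b) hβlt j
  have hexΦβ : ex h' j (Phi h h' (bet h j b)) = 0 := by
    have h2 := (psi_pair h' hpsiβ).2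
    rw [hexβ] at h2
    exact h2
  have hS : ∃ c', Psi h' j (some c') = some (Phi h h' (bet h j b), ex h j b) := by
    obtain ⟨c', hc'⟩ := psi_surj h' j (-(ex h j b)).toNat (Phi h h' (bet h j b)) hexΦβ
    refine ⟨c', ?_⟩
    rw [hc']
    congr 2
    omega
  have hM1j : Psi h' j (some (Phi h h' b)) = some (Phi h h' (bet h j b), ex h j b) := by
    have hun := Phi_unfold h h' hb
    rw [← hjch] at hun
    rw [hun, dif_pos hS]
    exact hS.choose_spec
  have hbphi : bet h' j (Phi h h' b) = Phi h h' (bet h j b) := (psi_pair h' hM1j).1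
  have hxphi : ex h' j (Phi h h' b) = ex h j b := (psi_pair h' hM1j).2
  -- Step 2 : weight preservation
  have hwtb : P'.wt (Phi h h' b) = P.wt b := by
    have h1 := wt_rel h' j (Phi h h' b)
    rw [hbphi, hxphi, hIHwt (bet h j b) hβlt] at h1
    rw [h1]
    exact (wt_rel h j b).symm
  -- Step 3 : commutation with e
  have hCe : ∀ i, Option.map (Phi h h') (P.e i (some b)) = P'.e i (some (Phi h h' b)) := by
    intro i
    by_cases hij : i = j
    · subst hij
      by_cases hs : -ex h i b ≤ phiZ h i (bet h i b)
      · have hs' : -ex h' i (Phi h h' b) ≤ phiZ h' i (bet h' i (Phi h h' b)) := by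
          rw [hbphi, hxphi, hIHphi (bet h i b) hβlt i]
          exact hs
        cases he : P.e i (some (bet h i b)) with
        | none =>
          have heb : P.e i (some b) = none := e_settled_none' h hs he
          have heΦβ : P'.e i (some (Phi h h' (bet h i b))) = none := by
            have hmap := hIHe (bet h i b) hβlt i
            rw [he] at hmap
            simpa using hmap.symm
          have heb' : P'.e i (some (Phi h h' b)) = none := by
            apply e_settled_none' h' hs'
            rw [hbphi]
            exact heΦβ
          rw [heb, heb']
          rfl
        | some β1 =>
          obtain ⟨b1, heb, hbb1, hxb1⟩ := e_settled_some' h hs he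
          have hΦβ1 : P'.e i (some (Phi h h' (bet h i b))) = some (Phi h h' β1) := by
            have hmap := hIHe (bet h i b) hβlt i
            rw [he] at hmap
            simpa using hmap.symm
          obtain ⟨c', heb', hbc', hxc'⟩ := e_settled_some' h' hs' (by rw [hbphi]; exact hΦβ1)
          have hb1lt : htN h b1 < N := by rw [← hN]; exact htN_e_lt h heb
          have hpsib1 := hIHpsi b1 hb1lt i
          rw [hbb1] at hpsib1
          have hc'Φ : c' = Phi h h' b1 := by
            apply psi_inj h' (i := i)
            constructor
            · rw [hbc', (psi_pair h' hpsib1).1]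
            · rw [hxc', hxphi, (psi_pair h' hpsib1).2, hxb1]
          rw [heb, heb', hc'Φ]
          rfl
      · push_neg at hs
        obtain ⟨b1, heb, hbb1, hxb1⟩ := e_unsettled h hs
        have hs'2 : phiZ h' i (bet h' i (Phi h h' b)) < -ex h' i (Phi h h' b) := by
          rw [hbphi, hxphi, hIHphi (bet h i b) hβlt i]
          exact hs
        obtain ⟨c', heb', hbc', hxc'⟩ := e_unsettled h' hs'2
        have hb1lt : htN h b1 < N := by rw [← hN]; exact htN_e_lt h heb
        have hpsib1 := hIHpsi b1 hb1lt i
        have hc'Φ : c' = Phi h h' b1 := by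
          apply psi_inj h' (i := i)
          constructor
          · rw [hbc', hbphi, (psi_pair h' hpsib1).1, hbb1]
          · rw [hxc', hxphi, (psi_pair h' hpsib1).2, hxb1]
        rw [heb, heb', hc'Φ]
        rfl
    · have hij' : i ≠ j := hij
      cases he : P.e i (some b) with
      | none =>
        have heβ : P.e i (some (bet h j b)) = none := e_other_none h hij' he
        have heΦβ : P'.e i (some (Phi h h' (bet h j b))) = none := by
          have hmap := hIHe (bet h j b) hβlt i
          rw [heβ] at hmap
          simpa using hmap.symm
        have hnone : P'.e i (some (Phi h h' b)) = none := by
          have h1 := e_rel_other h' hij' (Phi h h' b)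
          rw [hbphi, heΦβ] at h1
          exact (psi_eq_none_iff h' j _).mp h1
        rw [hnone]
        rfl
      | some b1 =>
        obtain ⟨heβ, hxb1⟩ := e_other_data h hij' he
        have hΦ : P'.e i (some (Phi h h' (bet h j b))) = some (Phi h h' (bet h j b1)) := by
          have hmap := hIHe (bet h j b) hβlt i
          rw [heβ] at hmap
          simpa using hmap.symm
        obtain ⟨c', heb', hbc', hxc'⟩ := e_other_some' h' hij' (by rw [hbphi]; exact hΦ)
        have hb1lt : htN h b1 < N := by rw [← hN]; exact htN_e_lt h he
        have hpsib1 := hIHpsi b1 hb1lt j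
        have hc'Φ : c' = Phi h h' b1 := by
          apply psi_inj h' (i := j)
          constructor
          · rw [hbc', (psi_pair h' hpsib1).1]
          · rw [hxc', hxphi, (psi_pair h' hpsib1).2, hxb1]
        rw [heb', hc'Φ]
        rfl
  -- Step 4 : kfun preservation
  have hkb : ∀ i, kfun h' i (Phi h h' b) = kfun h i b := by
    intro i
    cases he : P.e i (some b) with
    | none =>
      have hmap := hCe i
      rw [he] at hmap
      rw [kfun_none h he, kfun_none h' (by simpa using hmap.symm)]
    | some b1 =>
      have hmap := hCe i
      rw [he] at hmap
      have he' : P'.e i (some (Phi h h' b)) = some (Phi h h' b1) := by simpa using hmap.symm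
      have hb1lt : htN h b1 < N := by rw [← hN]; exact htN_e_lt h he
      rw [kfun_some h he, kfun_some h' he', hIHk b1 hb1lt i]
  have hepsb : ∀ i, epsZ h' i (Phi h h' b) = epsZ h i b := by
    intro i
    rw [eps_eq_k h', hkb i, eps_eq_k h]
  have hphib : ∀ i, phiZ h' i (Phi h h' b) = phiZ h i b := by
    intro i
    show epsZ h' i (Phi h h' b) + P'.wt (Phi h h' b) i = epsZ h i b + P.wt b i
    rw [hepsb i, hwtb]
  -- Step 5 : the embedding compatibility for all indices
  have hstar : ∀ i, Psi h' i (some (Phi h h' b))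
      = some (Phi h h' (bet h i b), ex h i b) := by
    intro i
    by_cases hij : i = j
    · subst hij; exact hM1j
    rw [psi_eq h' i (Phi h h' b)]
    suffices hgoal : bet h' i (Phi h h' b) = Phi h h' (bet h i b) ∧
        ex h' i (Phi h h' b) = ex h i b by
      rw [hgoal.1, hgoal.2]
    by_cases hA : ∃ k, k ≠ i ∧ P.e k (some b) ≠ none
    · obtain ⟨k, hki, hk⟩ := hA
      obtain ⟨b1, hb1⟩ := e_extract hk
      have hb1lt : htN h b1 < N := by rw [← hN]; exact htN_e_lt h hb1
      obtain ⟨heβk, hxk⟩ := e_other_data h hki hb1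
      have he' : P'.e k (some (Phi h h' b)) = some (Phi h h' b1) := by
        have hmap := hCe k
        rw [hb1] at hmap
        simpa using hmap.symm
      obtain ⟨heck, hxk'⟩ := e_other_data h' hki he'
      have hpsib1 := hIHpsi b1 hb1lt i
      have hbet1 : bet h' i (Phi h h' b1) = Phi h h' (bet h i b1) := (psi_pair h' hpsib1).1
      have hex1 : ex h' i (Phi h h' b1) = ex h i b1 := (psi_pair h' hpsib1).2
      have hy : ex h' i (Phi h h' b) = ex h i b := by rw [← hxk', hex1, hxk]
      refine ⟨?_, hy⟩
      rcases lt_or_eq_of_le (ex_nonpos h i b) with hxneg | hx0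
      · have hbetlt : htN h (bet h i b) < N := by rw [← hN]; exact htN_bet_lt h hxneg
        have hmape := hIHe (bet h i b) hbetlt k
        rw [heβk] at hmape
        exact e_inj h'.crystal (by rw [heck, hbet1]) (by simpa using hmape.symm)
      · have hfix : bet h i b = b := bet_fix h hx0
        have hb1fix : bet h i b1 = b1 := by
          have h2 := heβk
          rw [hfix, hb1] at h2
          exact (Option.some_injective _ h2).symm
        rw [hfix]
        exact e_inj h'.crystal (by rw [heck, hbet1, hb1fix]) he'
    · push_neg at hA
      obtain ⟨k0, hk0⟩ := h.has_e b hb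
      have hk0i : k0 = i := by
        by_contra hne
        exact hk0 (hA k0 hne)
      rw [hk0i] at hk0
      obtain ⟨b1, hb1⟩ := e_extract hk0
      have hb1lt : htN h b1 < N := by rw [← hN]; exact htN_e_lt h hb1
      have he' : P'.e i (some (Phi h h' b)) = some (Phi h h' b1) := by
        have hmap := hCe i
        rw [hb1] at hmap
        simpa using hmap.symm
      have hpsib1 := hIHpsi b1 hb1lt i
      have hbet1 : bet h' i (Phi h h' b1) = Phi h h' (bet h i b1) := (psi_pair h' hpsib1).1
      have hex1 : ex h' i (Phi h h' b1) = ex h i b1 := (psi_pair h' hpsib1).2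
      by_cases hs : -ex h i b ≤ phiZ h i (bet h i b)
      · obtain ⟨heβ, hxb1⟩ := e_settled_data h hs hb1
        by_cases hs' : -ex h' i (Phi h h' b) ≤ phiZ h' i (bet h' i (Phi h h' b))
        · obtain ⟨hec, hxc⟩ := e_settled_data h' hs' he'
          have hy : ex h' i (Phi h h' b) = ex h i b := by rw [← hxc, hex1, hxb1]
          refine ⟨?_, hy⟩
          rcases lt_or_eq_of_le (ex_nonpos h i b) with hxneg | hx0
          · have hbetlt : htN h (bet h i b) < N := by rw [← hN]; exact htN_bet_lt h hxneg
            have hmape := hIHe (bet h i b) hbetlt i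
            rw [heβ] at hmape
            exact e_inj h'.crystal (by rw [hec, hbet1]) (by simpa using hmape.symm)
          · have hfix : bet h i b = b := bet_fix h hx0
            have hb1fix : bet h i b1 = b1 := by
              have h2 := heβ
              rw [hfix, hb1] at h2
              exact (Option.some_injective _ h2).symm
            rw [hfix]
            exact e_inj h'.crystal (by rw [hec, hbet1, hb1fix]) he'
        · exfalso
          push_neg at hs'
          obtain ⟨c1', hec1, hbc1, hxc1⟩ := e_unsettled h' hs'
          have hc1 : c1' = Phi h h' b1 := by
            rw [hec1] at he'
            exact Option.some_injective _ he'
          rw [hc1] at hbc1 hxc1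
          rcases lt_or_eq_of_le (ex_nonpos h i b) with hxneg | hx0
          · -- phi contradiction, negative case
            have hb1x : ex h i b1 = ex h i b := hxb1
            have hexeq : ex h' i (Phi h h' b) = ex h i b - 1 := by
              have := hex1
              omega
            have hbetlt1 : htN h (bet h i b1) < N := by
              have hx1 : ex h i b1 < 0 := by omega
              calc htN h (bet h i b1) < htN h b1 := htN_bet_lt h hx1
                _ < N := hb1lt
            have hphi1 : phiZ h' i (Phi h h' (bet h i b1)) = phiZ h i (bet h i b1) :=
              hIHphi (bet h i b1) hbetlt1 i
            have hphie : phiZ h i (bet h i b1) = phiZ h i (bet h i b) + 1 := phiZ_e h heβ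
            -- hs' : phiZ h' i (bet h' i (Phi h h' b)) < -ex h' i (Phi h h' b)
            rw [← hbc1, hbet1] at hs'
            omega
          · -- phi contradiction, zero case
            have hfix : bet h i b = b := bet_fix h hx0
            have hb1fix : bet h i b1 = b1 := by
              have h2 := heβ
              rw [hfix, hb1] at h2
              exact (Option.some_injective _ h2).symm
            have hphi1 : phiZ h' i (Phi h h' b1) = phiZ h i b1 := hIHphi b1 hb1lt i
            have hphie : phiZ h i b1 = phiZ h i b + 1 := phiZ_e h hb1
            have hphinn : 0 ≤ phiZ h i b := phiZ_nonneg_of_ex_zero h hx0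
            rw [← hbc1, hbet1, hb1fix] at hs'
            omega
      · push_neg at hs
        have hxneg : ex h i b < 0 := by
          have := phiZ_bet_nonneg h i b
          omega
        obtain ⟨b1', hb1', hbb1, hxb1⟩ := e_unsettled h hs
        have hb1eq : b1' = b1 := by
          rw [hb1'] at hb1
          exact Option.some_injective _ hb1
        rw [hb1eq] at hbb1 hxb1
        by_cases hs' : -ex h' i (Phi h h' b) ≤ phiZ h' i (bet h' i (Phi h h' b))
        · exfalso
          obtain ⟨hec, hxc⟩ := e_settled_data h' hs' he'
          have hbetlt : htN h (bet h i b) < N := by rw [← hN]; exact htN_bet_lt h hxneg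
          have hphi1 : phiZ h' i (Phi h h' (bet h i b)) = phiZ h i (bet h i b) :=
            hIHphi (bet h i b) hbetlt i
          have hphie : phiZ h' i (bet h' i (Phi h h' b1)) = phiZ h' i (bet h' i (Phi h h' b)) + 1 :=
            phiZ_e h' hec
          rw [hbet1, hbb1] at hphie
          have hexeq : ex h' i (Phi h h' b) = ex h i b + 1 := by
            rw [← hxc, hex1, hxb1]
          omega
        · push_neg at hs'
          obtain ⟨c1', hec1, hbc1, hxc1⟩ := e_unsettled h' hs'
          have hc1 : c1' = Phi h h' b1 := by
            rw [hec1] at he'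
            exact Option.some_injective _ he'
          rw [hc1] at hbc1 hxc1
          constructor
          · rw [← hbc1, hbet1, hbb1]
          · have := hex1
            omega
  exact ⟨hwtb, hCe, hkb, hstar⟩

end Master

section Final

variable {n : ℕ} {C : SimpleCartanMatrix n} {B B' : Type*}
  {P : PreCrystal n B} {P' : PreCrystal n B'} {b0 : B} {b0' : B'}

lemma Phi_wt (h : KSConditions C.a P b0) (h' : KSConditions C.a P' b0') (b : B) :
    P'.wt (Phi h h' b) = P.wt b := (master h h' _ b rfl).1

lemma Phi_e (h : KSConditions C.a P b0) (h' : KSConditions C.a P' b0') (i : Fin n) (b : B) :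
    Option.map (Phi h h') (P.e i (some b)) = P'.e i (some (Phi h h' b)) :=
  (master h h' _ b rfl).2.1 i

lemma Phi_k (h : KSConditions C.a P b0) (h' : KSConditions C.a P' b0') (i : Fin n) (b : B) :
    kfun h' i (Phi h h' b) = kfun h i b := (master h h' _ b rfl).2.2.1 i

lemma Phi_psi (h : KSConditions C.a P b0) (h' : KSConditions C.a P' b0') (i : Fin n) (b : B) :
    Psi h' i (some (Phi h h' b)) = some (Phi h h' (bet h i b), ex h i b) :=
  (master h h' _ b rfl).2.2.2 i

lemma Phi_eps (h : KSConditions C.a P b0) (h' : KSConditions C.a P' b0') (i : Fin n) (b : B) :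
    P'.eps i (Phi h h' b) = P.eps i b := by
  rw [eps_coe h', eps_coe h]
  have : epsZ h' i (Phi h h' b) = epsZ h i b := by
    rw [eps_eq_k h', Phi_k h h' i b, eps_eq_k h]
  rw [this]

lemma Phi_phi (h : KSConditions C.a P b0) (h' : KSConditions C.a P' b0') (i : Fin n) (b : B) :
    P'.phi i (Phi h h' b) = P.phi i b := by
  rw [phi_coe h', phi_coe h]
  have h1 : epsZ h' i (Phi h h' b) = epsZ h i b := by
    rw [eps_eq_k h', Phi_k h h' i b, eps_eq_k h]
  have h2 : phiZ h' i (Phi h h' b) = phiZ h i b := by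
    show epsZ h' i (Phi h h' b) + P'.wt (Phi h h' b) i = epsZ h i b + P.wt b i
    rw [h1, Phi_wt h h' b]
  rw [h2]

lemma Phi_f (h : KSConditions C.a P b0) (h' : KSConditions C.a P' b0') (i : Fin n) (b : B) :
    Option.map (Phi h h') (P.f i (some b)) = P'.f i (some (Phi h h' b)) := by
  obtain ⟨c, hc⟩ := f_some h i b
  have he : P.e i (some c) = some b := (h.crystal.f_iff_e i b c).mp hc
  have hmap := Phi_e h h' i c
  rw [he] at hmap
  have he' : P'.e i (some (Phi h h' c)) = some (Phi h h' b) := by simpa using hmap.symm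
  have hf' : P'.f i (some (Phi h h' b)) = some (Phi h h' c) :=
    (h'.crystal.f_iff_e i (Phi h h' b) (Phi h h' c)).mpr he'
  rw [hc, hf']
  rfl

lemma Phi_inj (h : KSConditions C.a P b0) (h' : KSConditions C.a P' b0') :
    ∀ N, ∀ b c : B, htN h b = N → Phi h h' b = Phi h h' c → b = c := by
  intro N
  induction N using Nat.strong_induction_on with
  | _ N IH =>
  intro b c hN heq
  have hwt : P.wt b = P.wt c := by
    rw [← Phi_wt h h' b, heq, Phi_wt h h' c]
  by_cases hb : b = b0
  · have hc0 : c = b0 := h.uniq_wt_zero c (by rw [← hwt, hb, h.wt_b0])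
    rw [hb, hc0]
  · have hc : c ≠ b0 := by
      intro hcc
      rw [hcc, h.wt_b0] at hwt
      exact hb (h.uniq_wt_zero b hwt)
    obtain ⟨j, hj⟩ := exists_neg_ex h b hb
    have h1 := Phi_psi h h' j b
    have h2 := Phi_psi h h' j c
    rw [heq] at h1
    have hp := Prod.ext_iff.mp (Option.some_injective _ (h1.symm.trans h2))
    simp only at hp
    have hblt : htN h (bet h j b) < N := by rw [← hN]; exact htN_bet_lt h hj
    have hbet : bet h j b = bet h j c := IH _ hblt (bet h j b) (bet h j c) rfl hp.1
    exact psi_inj h ⟨hbet, hp.2⟩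

lemma Phi_surj (h : KSConditions C.a P b0) (h' : KSConditions C.a P' b0') :
    ∀ N, ∀ b' : B', htN h' b' = N → ∃ b, Phi h h' b = b' := by
  intro N
  induction N using Nat.strong_induction_on with
  | _ N IH =>
  intro b' hN
  by_cases hb' : b' = b0'
  · exact ⟨b0, by rw [Phi_b0, hb']⟩
  · obtain ⟨i, hi⟩ := exists_neg_ex h' b' hb'
    have hblt : htN h' (bet h' i b') < N := by rw [← hN]; exact htN_bet_lt h' hi
    obtain ⟨β, hβ⟩ := IH _ hblt (bet h' i b') rfl
    have hstar := Phi_psi h h' i β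
    rw [hβ] at hstar
    have hexb' : ex h' i (bet h' i b') = 0 := ex_bet_zero h' i b'
    have hxβ : ex h i β = 0 := by
      have := (psi_pair h' hstar).2
      rw [hexb'] at this
      exact this.symm
    obtain ⟨b, hbpsi⟩ := psi_surj h i (-(ex h' i b')).toNat β hxβ
    obtain ⟨hbx1, hbx2⟩ := psi_pair h hbpsi
    have hx' : ex h i b = ex h' i b' := by
      rw [hbx2]
      omega
    refine ⟨b, ?_⟩
    have h3 := Phi_psi h h' i b
    rw [hbx1, hβ, hx'] at h3
    have h4 : Psi h' i (some (Phi h h' b)) = Psi h' i (some b') := by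
      rw [h3, psi_eq h' i b']
    exact Option.some_injective _ ((Psi_emb h' i).inj h4)

end Final

end KSAux

/-- Any two crystals satisfying the Kashiwara–Saito conditions
(i)–(vi) and (vii′) are isomorphic by an isomorphism matching the distinguished
elements. -/
theorem kashiwara_saito_uniqueness {n : ℕ} (C : SimpleCartanMatrix n)
    {B B' : Type*} (P : PreCrystal n B) (P' : PreCrystal n B') (b0 : B) (b0' : B')
    (h : KSConditions C.a P b0) (h' : KSConditions C.a P' b0') :
    ∃ Φ : B → B', Function.Bijective Φ ∧ Φ b0 = b0' ∧
      (∀ b, P'.wt (Φ b) = P.wt b) ∧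
      (∀ i b, P'.eps i (Φ b) = P.eps i b) ∧
      (∀ i b, P'.phi i (Φ b) = P.phi i b) ∧
      (∀ i ob, Option.map Φ (P.e i ob) = P'.e i (Option.map Φ ob)) ∧
      (∀ i ob, Option.map Φ (P.f i ob) = P'.f i (Option.map Φ ob)) := by
  refine ⟨KSAux.Phi h h', ⟨?_, ?_⟩, KSAux.Phi_b0 h h', fun b => KSAux.Phi_wt h h' b,
    fun i b => KSAux.Phi_eps h h' i b, fun i b => KSAux.Phi_phi h h' i b, ?_, ?_⟩
  · intro a b heq
    exact KSAux.Phi_inj h h' (KSAux.htN h a) a b rfl heq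
  · intro b'
    exact KSAux.Phi_surj h h' (KSAux.htN h' b') b' rfl
  · intro i ob
    cases ob with
    | none =>
      show Option.map (KSAux.Phi h h') (P.e i none) = P'.e i none
      rw [h.crystal.e_none, h'.crystal.e_none]
      rfl
    | some b => exact KSAux.Phi_e h h' i b
  · intro i ob
    cases ob with
    | none =>
      show Option.map (KSAux.Phi h h') (P.f i none) = P'.f i none
      rw [h.crystal.f_none, h'.crystal.f_none]
      rfl
    | some b => exact KSAux.Phi_f h h' i b
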